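/- arXiv:2201.00078 — 3 statements merged into one kernel-verified Lean document; each statement's English description precedes it below -/
import Mathlib

section
/- Let G be a finite simple connected cubic graph and S a set of vertices. If the induced subgraph on the complement of S is acyclic, then S is a P3-hull set of G. -/
open SimpleGraph

def infectStep {V : Type*} (G : SimpleGraph V) (S : Set V) : Set V :=
  S ∪ {v | ∃ a b, a ≠ b ∧ a ∈ S ∧ b ∈ S ∧ G.Adj v a ∧ G.Adj v b}

def infectIter {V : Type*} (G : SimpleGraph V) (S : Set V) : ℕ → Set V
  | 0 => S
  | p + 1 => infectStep G (infectIter G S p)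

def IsHullSet {V : Type*} (G : SimpleGraph V) (S : Set V) : Prop :=
  ∃ p, infectIter G S p = Set.univ

noncomputable def hullNumber {V : Type*} (G : SimpleGraph V) : ℕ :=
  sInf {m | ∃ S : Set V, S.ncard = m ∧ IsHullSet G S}

noncomputable def infectTime {V : Type*} (G : SimpleGraph V) (S : Set V) : ℕ :=
  sInf {p | infectIter G S p = Set.univ}

def IsCubic {V : Type*} (G : SimpleGraph V) : Prop :=
  ∀ v, {w | G.Adj v w}.ncard = 3

def IsDecyclingSet {V : Type*} (G : SimpleGraph V) (S : Set V) : Prop :=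
  (G.induce Sᶜ).IsAcyclic

noncomputable def decyclingNumber {V : Type*} (G : SimpleGraph V) : ℕ :=
  sInf {m | ∃ S : Set V, S.ncard = m ∧ IsDecyclingSet G S}

def pHull {V : Type*} (G : SimpleGraph V) (S : Set V) : Set V :=
  ⋃ p, infectIter G S p

noncomputable def graphDiam {V : Type*} (G : SimpleGraph V) : ℕ :=
  sSup {d | ∃ a b, d = G.dist a b}

noncomputable def maxCompDiam {V : Type*} (G : SimpleGraph V) : ℕ :=
  sSup {d | ∃ c : G.ConnectedComponent, d = graphDiam (G.induce c.supp)}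

open Fin.NatCast in
def genPetersen (n k : ℕ) [NeZero n] : SimpleGraph (Fin n ⊕ Fin n) :=
  SimpleGraph.fromRel fun x y =>
    match x, y with
    | Sum.inl i, Sum.inl j => j = i + 1
    | Sum.inl i, Sum.inr j => i = j
    | Sum.inr i, Sum.inr j => j = i + (k : Fin n)
    | _, _ => False

/- auxiliary lemmas -/

lemma aux_loop_path_nil {V : Type*} {G : SimpleGraph V} {v : V} {p : G.Walk v v}
    (hp : p.IsPath) : p.length = 0 := by
  cases p with
  | nil => rfl
  | cons h q =>
    exfalso
    rw [SimpleGraph.Walk.cons_isPath_iff] at hp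
    exact hp.2 q.end_mem_support

lemma aux_end_edge {V : Type*} {G : SimpleGraph V} {w b : V} {q : G.Walk w b}
    (hq : q.IsPath) (he : s(b, w) ∈ q.edges) : q.length = 1 := by
  cases q with
  | nil => simp at he
  | @cons _ y _ h t =>
    rw [SimpleGraph.Walk.edges_cons, List.mem_cons] at he
    rw [SimpleGraph.Walk.cons_isPath_iff] at hq
    rcases he with he | he
    · rw [Sym2.eq_iff] at he
      rcases he with ⟨hb, hw⟩ | ⟨hb, hw⟩
      · exact absurd hw h.ne
      · subst hb
        simp [aux_loop_path_nil hq.1]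
    · exact absurd (t.snd_mem_support_of_mem_edges he) hq.2

lemma aux_support_len_one {V : Type*} {G : SimpleGraph V} {x y : V} {q : G.Walk x y}
    (h : q.length = 1) : q.support = [x, y] := by
  cases q with
  | nil => simp at h
  | cons ha t =>
    cases t with
    | nil => simp
    | cons hb t' => simp at h

/-- If a vertex `c` on a path `p : Walk a b` is such that the portion from `c` to `b`
has length 1, then the support of p decomposes and `c` is determined. -/
lemma aux_penult {V : Type*} [DecidableEq V] {G : SimpleGraph V} {a b c : V} {p : G.Walk a b}
    (hc : c ∈ p.support) (h1 : (p.dropUntil c hc).length = 1) :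
    p.support.dropLast.getLast? = some c := by
  have hspec := p.take_spec hc
  have hsupp : p.support = (p.takeUntil c hc).support ++ [b] := by
    conv_lhs => rw [← hspec]
    rw [SimpleGraph.Walk.support_append, aux_support_len_one h1, List.tail_cons]
  have hdl : p.support.dropLast = (p.takeUntil c hc).support := by
    rw [hsupp, List.dropLast_concat]
  rw [hdl]
  have hne : (p.takeUntil c hc).support ≠ [] := SimpleGraph.Walk.support_ne_nil _
  rw [List.getLast?_eq_getLast hne]
  exact congrArg some (SimpleGraph.Walk.getLast_support _)

lemma aux_min_degree_two_cycle {W : Type*} [Fintype W] [DecidableEq W] (G' : SimpleGraph W)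
    (hne : Nonempty W)
    (hdeg : ∀ v : W, ∃ a b : W, a ≠ b ∧ G'.Adj v a ∧ G'.Adj v b) :
    ¬ G'.IsAcyclic := by
  classical
  intro hacyc
  set L : Set ℕ := {n | ∃ (x y : W) (q : G'.Walk x y), q.IsPath ∧ q.length = n} with hL
  obtain ⟨v0⟩ := hne
  have h0 : (0 : ℕ) ∈ L := ⟨v0, v0, SimpleGraph.Walk.nil, by simp, rfl⟩
  have hbdd : BddAbove L := by
    refine ⟨Fintype.card W, ?_⟩
    rintro n ⟨x, y, q, hq, rfl⟩
    exact le_of_lt hq.length_lt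
  have hmem : sSup L ∈ L := Nat.sSup_mem ⟨0, h0⟩ hbdd
  set n := sSup L with hn
  obtain ⟨a, b, p, hp, hplen⟩ := hmem
  have hmax : ∀ m ∈ L, m ≤ n := fun m hm => le_csSup hbdd hm
  -- every neighbor of b is on p
  have hmemsupp : ∀ w : W, G'.Adj b w → w ∈ p.support := by
    intro w hw
    by_contra hns
    have hpath : (SimpleGraph.Walk.cons hw.symm p.reverse).IsPath := by
      rw [SimpleGraph.Walk.cons_isPath_iff]
      refine ⟨hp.reverse, ?_⟩
      rw [SimpleGraph.Walk.support_reverse, List.mem_reverse]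
      exact hns
    have : n + 1 ∈ L := ⟨w, a, _, hpath, by simp [hplen]⟩
    exact absurd (hmax _ this) (by omega)
  obtain ⟨c, d, hcd, hbc, hbd⟩ := hdeg b
  have hcs := hmemsupp c hbc
  have hds := hmemsupp d hbd
  -- construct a cycle unless dropUntil has length 1
  have key : ∀ (w : W) (hw : G'.Adj b w) (hws : w ∈ p.support),
      (p.dropUntil w hws).length = 1 := by
    intro w hw hws
    by_contra hlen
    have hqpath : (p.dropUntil w hws).IsPath := hp.dropUntil hws
    have hedge : s(b, w) ∉ (p.dropUntil w hws).edges := by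
      intro he
      exact hlen (aux_end_edge hqpath he)
    have hcyc : (SimpleGraph.Walk.cons hw (p.dropUntil w hws)).IsCycle :=
      (SimpleGraph.Walk.cons_isCycle_iff _ hw).mpr ⟨hqpath, hedge⟩
    exact hacyc _ hcyc
  have h1 := aux_penult hcs (key c hbc hcs)
  have h2 := aux_penult hds (key d hbd hds)
  rw [h1] at h2
  exact hcd (Option.some_injective _ h2)

theorem stmt1 {V : Type*} [Fintype V] (G : SimpleGraph V)
    (hcub : IsCubic G) (hconn : G.Connected) (S : Set V)
    (hS : (G.induce Sᶜ).IsAcyclic) : IsHullSet G S := by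
  classical
  -- monotonicity of infectIter
  have hsub : ∀ p, infectIter G S p ⊆ infectIter G S (p + 1) := by
    intro p
    show infectIter G S p ⊆ infectStep G (infectIter G S p)
    exact Set.subset_union_left
  have hSsub : ∀ p, S ⊆ infectIter G S p := by
    intro p
    induction p with
    | zero => exact subset_rfl
    | succ q ih => exact ih.trans (hsub q)
  -- stabilization
  have hstab : ∃ p, infectIter G S (p + 1) = infectIter G S p := by
    by_contra hno
    push_neg at hno
    have hgrow : ∀ p, p ≤ (infectIter G S p).ncard := by
      intro p
      induction p with
      | zero => exact Nat.zero_le _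
      | succ q ih =>
        have hss : infectIter G S q ⊂ infectIter G S (q + 1) :=
          (hsub q).ssubset_of_ne (Ne.symm (hno q))
        have := Set.ncard_lt_ncard hss (Set.toFinite _)
        omega
    have h1 := hgrow (Fintype.card V + 1)
    have h2 : (infectIter G S (Fintype.card V + 1)).ncard ≤ Fintype.card V := by
      have := Set.ncard_le_ncard (Set.subset_univ (infectIter G S (Fintype.card V + 1)))
        Set.finite_univ
      rwa [Set.ncard_univ, Nat.card_eq_fintype_card] at this
    omega
  obtain ⟨p, hfix⟩ := hstab
  set H := infectIter G S p with hH
  have hfix' : infectStep G H = H := hfix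
  suffices hHuniv : H = Set.univ by exact ⟨p, hHuniv⟩
  by_contra hne
  -- every vertex outside H has two distinct neighbors outside H
  have hdeg : ∀ v : V, v ∉ H → ∃ a b : V, a ≠ b ∧ a ∉ H ∧ b ∉ H ∧ G.Adj v a ∧ G.Adj v b := by
    intro v hv
    set N : Set V := {w | G.Adj v w} with hN
    have hNcard : N.ncard = 3 := hcub v
    have hint : ¬ 1 < (N ∩ H).ncard := by
      intro h2
      obtain ⟨x, y, hx, hy, hxy⟩ := (Set.one_lt_ncard_iff (Set.toFinite _)).mp h2
      have : v ∈ infectStep G H :=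
        Or.inr ⟨x, y, hxy, hx.2, hy.2, hx.1, hy.1⟩
      rw [hfix'] at this
      exact hv this
    have hsum : (N ∩ H).ncard + (N \ H).ncard = 3 := by
      rw [Set.ncard_inter_add_ncard_diff_eq_ncard N H (Set.toFinite _)]
      exact hNcard
    have hdiff : 1 < (N \ H).ncard := by omega
    obtain ⟨x, y, hx, hy, hxy⟩ := (Set.one_lt_ncard_iff (Set.toFinite _)).mp hdiff
    exact ⟨x, y, hxy, hx.2, hy.2, hx.1, hy.1⟩
  -- H contains S, so Hᶜ ⊆ Sᶜ
  have hcompl : (Hᶜ : Set V) ⊆ Sᶜ := Set.compl_subset_compl.mpr (hSsub p)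
  -- the induced graph on Hᶜ is acyclic
  have hacyc : (G.induce (Hᶜ : Set V)).IsAcyclic := by
    intro v c hc
    let f : G.induce (Hᶜ : Set V) →g G.induce (Sᶜ : Set V) :=
      ⟨fun x => ⟨x.1, hcompl x.2⟩, fun {x y} h => h⟩
    have hinj : Function.Injective f := by
      intro x y hxy
      have : (f x).val = (f y).val := congrArg Subtype.val hxy
      exact Subtype.ext this
    exact hS _ (hc.map hinj)
  -- nonempty
  have hwne : Nonempty ↥(Hᶜ : Set V) := by
    have : ∃ v, v ∉ H := by
      by_contra h
      push_neg at h
      exact hne (Set.eq_univ_of_forall h)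
    obtain ⟨v, hv⟩ := this
    exact ⟨⟨v, hv⟩⟩
  haveI : Fintype ↥(Hᶜ : Set V) := Fintype.ofFinite _
  -- min degree two in the induced graph
  refine absurd hacyc (aux_min_degree_two_cycle _ hwne ?_)
  rintro ⟨v, hv⟩
  obtain ⟨x, y, hxy, hx, hy, hvx, hvy⟩ := hdeg v hv
  exact ⟨⟨x, hx⟩, ⟨y, hy⟩, fun h => hxy (congrArg Subtype.val h), hvx, hvy⟩
end

section
/- If W is a nonempty set of vertices of a cubic graph G inducing a cycle, and S is a set of vertices disjoint from W, then no iterate I^p[S] of the infection process starting at S can ever contain a vertex of W; in particular S is not a P3-hull set. -/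
open SimpleGraph

theorem stmt3 {V : Type*} [Fintype V] (G : SimpleGraph V)
    (hcub : IsCubic G) (W : Set V) (hWne : W.Nonempty)
    (hWcyc : ∀ w ∈ W, ({x ∈ W | G.Adj w x}).ncard = 2)
    (S : Set V) (hdis : Disjoint S W) :
    (∀ p : ℕ, Disjoint (infectIter G S p) W) ∧ ¬ IsHullSet G S := by
  have key : ∀ p, Disjoint (infectIter G S p) W := by
    intro p
    induction p with
    | zero => exact hdis
    | succ p ih =>
      rw [Set.disjoint_left]
      intro v hv hvW
      simp only [infectIter, infectStep, Set.mem_union, Set.mem_setOf_eq] at hv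
      rcases hv with hv | ⟨a, b, hab, ha, hb, hva, hvb⟩
      · exact Set.disjoint_left.mp ih hv hvW
      · have haW : a ∉ W := fun h => Set.disjoint_left.mp ih ha h
        have hbW : b ∉ W := fun h => Set.disjoint_left.mp ih hb h
        have h3 := hcub v
        have h2 := hWcyc v hvW
        have hone : ({x | G.Adj v x} \ {x ∈ W | G.Adj v x}).ncard = 1 := by
          rw [Set.ncard_diff (fun x hx => hx.2) (Set.toFinite _), h3, h2]
        have ha' : a ∈ {x | G.Adj v x} \ {x ∈ W | G.Adj v x} :=
          ⟨hva, fun h => haW h.1⟩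
        have hb' : b ∈ {x | G.Adj v x} \ {x ∈ W | G.Adj v x} :=
          ⟨hvb, fun h => hbW h.1⟩
        obtain ⟨c, hc⟩ := Set.ncard_eq_one.mp hone
        rw [hc] at ha' hb'
        exact hab (ha'.trans hb'.symm)
  refine ⟨key, ?_⟩
  rintro ⟨p, hp⟩
  obtain ⟨w, hw⟩ := hWne
  exact Set.disjoint_left.mp (key p) (hp ▸ Set.mem_univ w) hw
end

section
/- Let G(n,k)#G(n,k) be the graph obtained from two disjoint copies of the generalized Petersen graph G(n,k) by deleting the edges u_0 u_1 and u_0' u_1' and adding the edges u_0 u_0' and u_1 u_1'. Then the P3-hull number of G(n,k)#G(n,k) equals n + 1. -/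
open SimpleGraph
open Fin.NatCast

def petersenSurgery (n k : ℕ) [NeZero n] :
    SimpleGraph ((Fin n ⊕ Fin n) ⊕ (Fin n ⊕ Fin n)) :=
  SimpleGraph.fromRel fun x y =>
    match x, y with
    | Sum.inl a, Sum.inl b =>
        (genPetersen n k).Adj a b ∧
          ¬((a = Sum.inl 0 ∧ b = Sum.inl 1) ∨ (a = Sum.inl 1 ∧ b = Sum.inl 0))
    | Sum.inr a, Sum.inr b =>
        (genPetersen n k).Adj a b ∧
          ¬((a = Sum.inl 0 ∧ b = Sum.inl 1) ∨ (a = Sum.inl 1 ∧ b = Sum.inl 0))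
    | Sum.inl a, Sum.inr b =>
        (a = Sum.inl 0 ∧ b = Sum.inl 0) ∨ (a = Sum.inl 1 ∧ b = Sum.inl 1)
    | _, _ => False

open Fin.CommRing

section Generic
variable {V : Type*} (G : SimpleGraph V)

lemma subset_infectStep (S : Set V) : S ⊆ infectStep G S := Set.subset_union_left

lemma infectIter_subset_succ (S : Set V) (p : ℕ) :
    infectIter G S p ⊆ infectIter G S (p + 1) :=
  subset_infectStep G _

lemma infectIter_mono (S : Set V) {p q : ℕ} (h : p ≤ q) :
    infectIter G S p ⊆ infectIter G S q := by
  induction q with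
  | zero => rw [Nat.le_zero.mp h]
  | succ q ih =>
    rcases Nat.lt_or_ge p (q + 1) with hlt | hge
    · exact (ih (Nat.lt_succ_iff.mp hlt)).trans (infectIter_subset_succ G S q)
    · rw [Nat.le_antisymm h hge]

lemma seeds_subset_pHull (S : Set V) : S ⊆ pHull G S := fun x hx =>
  Set.mem_iUnion.2 ⟨0, hx⟩

lemma pHull_closed (S : Set V) {x a b : V} (hab : a ≠ b) (ha : a ∈ pHull G S)
    (hb : b ∈ pHull G S) (h1 : G.Adj x a) (h2 : G.Adj x b) : x ∈ pHull G S := by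
  obtain ⟨p, hp⟩ := Set.mem_iUnion.1 ha
  obtain ⟨q, hq⟩ := Set.mem_iUnion.1 hb
  exact Set.mem_iUnion.2 ⟨max p q + 1, Or.inr ⟨a, b, hab,
    infectIter_mono G S (le_max_left p q) hp,
    infectIter_mono G S (le_max_right p q) hq, h1, h2⟩⟩

lemma isHullSet_of_pHull_eq_univ [Fintype V] (S : Set V) (h : pHull G S = Set.univ) :
    IsHullSet G S := by
  classical
  have hex : ∀ v : V, ∃ p, v ∈ infectIter G S p := by
    intro v
    have hv : v ∈ pHull G S := by rw [h]; trivial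
    exact Set.mem_iUnion.1 hv
  refine ⟨Finset.univ.sup fun v => Nat.find (hex v), ?_⟩
  ext v
  simp only [Set.mem_univ, iff_true]
  exact infectIter_mono G S (Finset.le_sup (Finset.mem_univ v)) (Nat.find_spec (hex v))

end Generic

section LB
attribute [local instance] Classical.propDecidable
variable {V : Type*} [Fintype V] [DecidableEq V]

noncomputable def edgesIn (G : SimpleGraph V) (A : Finset V) : Finset (Sym2 V) :=
  G.edgeFinset.filter fun e => ∀ y ∈ e, y ∈ A

lemma cross_sub (G : SimpleGraph V) {A B : Finset V} (hAB : A ⊆ B)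
    (hnew : ∀ x ∈ B, x ∉ A → ∃ a b, a ≠ b ∧ a ∈ A ∧ b ∈ A ∧ G.Adj x a ∧ G.Adj x b) :
    ((edgesIn G A) ∪ ((B \ A).biUnion
      (fun x => (G.neighborFinset x ∩ A).image (fun a => s(x, a)))) ⊆ edgesIn G B) ∧
    (edgesIn G A).card + 2 * (B.card - A.card) ≤
      ((edgesIn G A) ∪ ((B \ A).biUnion
      (fun x => (G.neighborFinset x ∩ A).image (fun a => s(x, a))))).card := by
  set cross := (B \ A).biUnion
      (fun x => (G.neighborFinset x ∩ A).image (fun a => s(x, a))) with hcross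
  have hmemc : ∀ e ∈ cross, ∃ x a, x ∈ B ∧ x ∉ A ∧ a ∈ A ∧ G.Adj x a ∧ e = s(x, a) := by
    intro e he
    simp only [hcross, Finset.mem_biUnion, Finset.mem_sdiff, Finset.mem_image,
      Finset.mem_inter, mem_neighborFinset] at he
    obtain ⟨x, ⟨hxB, hxA⟩, a, ⟨hadj, haA⟩, hea⟩ := he
    exact ⟨x, a, hxB, hxA, haA, hadj, hea.symm⟩
  have hsub : edgesIn G A ∪ cross ⊆ edgesIn G B := by
    intro e he
    rcases Finset.mem_union.1 he with he | he
    · simp only [edgesIn, Finset.mem_filter] at he ⊢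
      exact ⟨he.1, fun y hy => hAB (he.2 y hy)⟩
    · obtain ⟨x, a, hxB, hxA, haA, hadj, rfl⟩ := hmemc e he
      simp only [edgesIn, Finset.mem_filter, mem_edgeFinset]
      refine ⟨hadj, ?_⟩
      intro y hy
      rcases Sym2.mem_iff.1 hy with rfl | rfl
      · exact hxB
      · exact hAB haA
  refine ⟨hsub, ?_⟩
  have hdisj : Disjoint (edgesIn G A) cross := by
    rw [Finset.disjoint_left]
    intro e heA hec
    obtain ⟨x, a, hxB, hxA, haA, hadj, rfl⟩ := hmemc e hec
    simp only [edgesIn, Finset.mem_filter] at heA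
    exact hxA (heA.2 x (Sym2.mem_mk_left x a))
  have hcard : 2 * (B \ A).card ≤ cross.card := by
    rw [hcross, Finset.card_biUnion]
    · calc 2 * (B \ A).card = ∑ _x ∈ B \ A, 2 := by
            rw [Finset.sum_const, smul_eq_mul, mul_comm]
        _ ≤ _ := by
            refine Finset.sum_le_sum ?_
            intro x hx
            rw [Finset.mem_sdiff] at hx
            obtain ⟨a, b, hab, haA, hbA, hxa, hxb⟩ := hnew x hx.1 hx.2
            have hinj : Set.InjOn (fun a => s(x, a)) ↑(G.neighborFinset x ∩ A) := by
              intro p hp q hq hpq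
              simp only [Sym2.eq, Sym2.rel_iff', Prod.mk.injEq, Prod.swap_prod_mk] at hpq
              rcases hpq with ⟨_, h⟩ | ⟨h1, h2⟩
              · exact h
              · exfalso
                rw [Finset.coe_inter, Set.mem_inter_iff, Finset.mem_coe,
                  Finset.mem_coe] at hp
                apply hx.2
                rw [← h2]
                exact hp.2
            rw [Finset.card_image_of_injOn hinj]
            have hpair : ({a, b} : Finset V) ⊆ G.neighborFinset x ∩ A := by
              intro y hy
              rcases Finset.mem_insert.1 hy with rfl | hy
              · exact Finset.mem_inter.2 ⟨(mem_neighborFinset G x y).2 hxa, haA⟩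
              · rw [Finset.mem_singleton] at hy
                subst hy
                exact Finset.mem_inter.2 ⟨(mem_neighborFinset G x y).2 hxb, hbA⟩
            have := Finset.card_le_card hpair
            rwa [Finset.card_insert_of_notMem (by simp [hab]), Finset.card_singleton] at this
    · intro x hx y hy hxy
      rw [Function.onFun, Finset.disjoint_left]
      intro e hex hey
      simp only [Finset.mem_image, Finset.mem_inter, mem_neighborFinset] at hex hey
      obtain ⟨a, ⟨_, haA⟩, hea⟩ := hex
      obtain ⟨b, ⟨_, hbA⟩, heb⟩ := hey
      rw [← hea] at heb
      simp only [Sym2.eq, Sym2.rel_iff', Prod.mk.injEq, Prod.swap_prod_mk] at heb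
      rw [Finset.mem_coe, Finset.mem_sdiff] at hx hy
      rcases heb with ⟨h1, _⟩ | ⟨h1, h2⟩
      · exact hxy h1.symm
      · apply hx.2
        rw [← h2]
        exact hbA
  rw [Finset.card_union_of_disjoint hdisj, Finset.card_sdiff_of_subset hAB] at *
  omega



lemma cross_card (G : SimpleGraph V) {A B : Finset V} (hAB : A ⊆ B)
    (hnew : ∀ x ∈ B, x ∉ A → ∃ a b, a ≠ b ∧ a ∈ A ∧ b ∈ A ∧ G.Adj x a ∧ G.Adj x b) :
    ((B \ A).biUnion (fun x => (G.neighborFinset x ∩ A).image (fun a => s(x, a)))).card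
      = ∑ x ∈ B \ A, (G.neighborFinset x ∩ A).card := by
  rw [Finset.card_biUnion]
  · refine Finset.sum_congr rfl ?_
    intro x hx
    rw [Finset.mem_sdiff] at hx
    refine Finset.card_image_of_injOn ?_
    intro p hp q hq hpq
    simp only [Sym2.eq, Sym2.rel_iff', Prod.mk.injEq, Prod.swap_prod_mk] at hpq
    rcases hpq with ⟨_, h⟩ | ⟨h1, h2⟩
    · exact h
    · exfalso
      rw [Finset.coe_inter, Set.mem_inter_iff, Finset.mem_coe, Finset.mem_coe] at hp
      apply hx.2
      rw [← h2]
      exact hp.2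
  · intro x hx y hy hxy
    rw [Function.onFun, Finset.disjoint_left]
    intro e hex hey
    simp only [Finset.mem_image, Finset.mem_inter, mem_neighborFinset] at hex hey
    obtain ⟨a, ⟨_, haA⟩, hea⟩ := hex
    obtain ⟨b, ⟨_, hbA⟩, heb⟩ := hey
    rw [← hea] at heb
    simp only [Sym2.eq, Sym2.rel_iff', Prod.mk.injEq, Prod.swap_prod_mk] at heb
    rw [Finset.mem_coe, Finset.mem_sdiff] at hx hy
    rcases heb with ⟨h1, _⟩ | ⟨h1, h2⟩
    · exact hxy h1.symm
    · apply hx.2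
      rw [← h2]
      exact hbA

lemma two_le_inter (G : SimpleGraph V) {A : Finset V} {x : V}
    (h : ∃ a b, a ≠ b ∧ a ∈ A ∧ b ∈ A ∧ G.Adj x a ∧ G.Adj x b) :
    2 ≤ (G.neighborFinset x ∩ A).card := by
  obtain ⟨a, b, hab, haA, hbA, hxa, hxb⟩ := h
  have hpair : ({a, b} : Finset V) ⊆ G.neighborFinset x ∩ A := by
    intro y hy
    rcases Finset.mem_insert.1 hy with rfl | hy
    · exact Finset.mem_inter.2 ⟨(mem_neighborFinset G x y).2 hxa, haA⟩
    · rw [Finset.mem_singleton] at hy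
      subst hy
      exact Finset.mem_inter.2 ⟨(mem_neighborFinset G x y).2 hxb, hbA⟩
  have := Finset.card_le_card hpair
  rwa [Finset.card_insert_of_notMem (by simp [hab]), Finset.card_singleton] at this

lemma edgesIn_step_weak (G : SimpleGraph V) {A B : Finset V} (hAB : A ⊆ B)
    (hnew : ∀ x ∈ B, x ∉ A → ∃ a b, a ≠ b ∧ a ∈ A ∧ b ∈ A ∧ G.Adj x a ∧ G.Adj x b) :
    (edgesIn G A).card + 2 * (B.card - A.card) ≤ (edgesIn G B).card := by
  obtain ⟨hsub, hcard⟩ := cross_sub G hAB hnew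
  exact hcard.trans (Finset.card_le_card hsub)

lemma edgesIn_step_strict (G : SimpleGraph V) {A : Finset V}
    (hnew : ∀ x ∈ (Finset.univ : Finset V), x ∉ A →
      ∃ a b, a ≠ b ∧ a ∈ A ∧ b ∈ A ∧ G.Adj x a ∧ G.Adj x b)
    (hx0 : ∃ x₀ : V, x₀ ∉ A)
    (h3 : ∀ x : V, ∃ a b c : V, a ≠ b ∧ a ≠ c ∧ b ≠ c ∧ G.Adj x a ∧ G.Adj x b ∧ G.Adj x c) :
    (edgesIn G A).card + 2 * ((Finset.univ : Finset V).card - A.card) + 1 ≤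
      (edgesIn G (Finset.univ : Finset V)).card := by
  have hAB : A ⊆ Finset.univ := Finset.subset_univ A
  set B : Finset V := Finset.univ with hB
  set cross := (B \ A).biUnion
      (fun x => (G.neighborFinset x ∩ A).image (fun a => s(x, a))) with hcross
  have hmemc : ∀ e ∈ cross, ∃ x a, x ∈ B ∧ x ∉ A ∧ a ∈ A ∧ G.Adj x a ∧ e = s(x, a) := by
    intro e he
    simp only [hcross, Finset.mem_biUnion, Finset.mem_sdiff, Finset.mem_image,
      Finset.mem_inter, mem_neighborFinset] at he
    obtain ⟨x, ⟨hxB, hxA⟩, a, ⟨hadj, haA⟩, hea⟩ := he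
    exact ⟨x, a, hxB, hxA, haA, hadj, hea.symm⟩
  obtain ⟨hsub, _⟩ := cross_sub G hAB hnew
  have hdisj : Disjoint (edgesIn G A) cross := by
    rw [Finset.disjoint_left]
    intro e heA hec
    obtain ⟨x, a, hxB, hxA, haA, hadj, rfl⟩ := hmemc e hec
    simp only [edgesIn, Finset.mem_filter] at heA
    exact hxA (heA.2 x (Sym2.mem_mk_left x a))
  have hsum : cross.card = ∑ x ∈ B \ A, (G.neighborFinset x ∩ A).card :=
    cross_card G hAB hnew
  obtain ⟨x₀, hx₀⟩ := hx0
  have hx₀B : x₀ ∈ B \ A := by simp [hB, hx₀]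
  by_cases hw : ∃ w ∈ G.neighborFinset x₀, w ∉ A
  · -- extra edge s(x₀, w) not counted
    obtain ⟨w, hwnb, hwA⟩ := hw
    have hadjw : G.Adj x₀ w := (mem_neighborFinset G x₀ w).1 hwnb
    have henotin : s(x₀, w) ∉ edgesIn G A ∪ cross := by
      intro hmem
      rcases Finset.mem_union.1 hmem with hmem | hmem
      · simp only [edgesIn, Finset.mem_filter] at hmem
        exact hx₀ (hmem.2 x₀ (Sym2.mem_mk_left x₀ w))
      · obtain ⟨x, a, hxB, hxA, haA, _, heq⟩ := hmemc _ hmem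
        have hamem : a ∈ s(x₀, w) := by rw [heq]; exact Sym2.mem_mk_right x a
        rcases Sym2.mem_iff.1 hamem with rfl | rfl
        · exact hx₀ haA
        · exact hwA haA
    have hein : s(x₀, w) ∈ edgesIn G B := by
      simp only [edgesIn, Finset.mem_filter, mem_edgeFinset]
      exact ⟨hadjw, fun y _ => Finset.mem_univ y⟩
    have hins : insert s(x₀, w) (edgesIn G A ∪ cross) ⊆ edgesIn G B := by
      intro e he
      rcases Finset.mem_insert.1 he with rfl | he
      · exact hein
      · exact hsub he
    have h1 := Finset.card_le_card hins
    rw [Finset.card_insert_of_notMem henotin,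
      Finset.card_union_of_disjoint hdisj] at h1
    have hge : 2 * (B \ A).card ≤ cross.card := by
      rw [hsum]
      calc 2 * (B \ A).card = ∑ _x ∈ B \ A, 2 := by
            rw [Finset.sum_const, smul_eq_mul, mul_comm]
        _ ≤ _ := Finset.sum_le_sum fun x hx => two_le_inter G
            (hnew x (Finset.mem_univ x) (Finset.mem_sdiff.1 hx).2)
    rw [Finset.card_sdiff_of_subset hAB] at hge
    omega
  · -- all neighbors of x₀ in A : its inter has card ≥ 3
    push_neg at hw
    obtain ⟨a, b, c, hab, hac, hbc, ha, hb, hc⟩ := h3 x₀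
    have htrip : ({a, b, c} : Finset V) ⊆ G.neighborFinset x₀ ∩ A := by
      intro y hy
      simp only [Finset.mem_insert, Finset.mem_singleton] at hy
      have hy' : y ∈ G.neighborFinset x₀ := by
        rcases hy with rfl | rfl | rfl
        · exact (mem_neighborFinset G x₀ y).2 ha
        · exact (mem_neighborFinset G x₀ y).2 hb
        · exact (mem_neighborFinset G x₀ y).2 hc
      exact Finset.mem_inter.2 ⟨hy', hw y hy'⟩
    have h3card : 3 ≤ (G.neighborFinset x₀ ∩ A).card := by
      have := Finset.card_le_card htrip
      rwa [Finset.card_insert_of_notMem (by simp [hab, hac]),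
        Finset.card_insert_of_notMem (by simp [hbc]), Finset.card_singleton] at this
    have hge : 2 * (B \ A).card + 1 ≤ cross.card := by
      rw [hsum, ← Finset.add_sum_erase _ _ hx₀B]
      have h2 : ∀ x ∈ (B \ A).erase x₀, 2 ≤ (G.neighborFinset x ∩ A).card :=
        fun x hx => two_le_inter G (hnew x (Finset.mem_univ x)
          (Finset.mem_sdiff.1 (Finset.mem_of_mem_erase hx)).2)
      calc 2 * (B \ A).card + 1
          = 3 + 2 * ((B \ A).card - 1) := by
            have : 1 ≤ (B \ A).card := Finset.card_pos.2 ⟨x₀, hx₀B⟩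
            omega
        _ = 3 + 2 * ((B \ A).erase x₀).card := by
            rw [Finset.card_erase_of_mem hx₀B]
        _ ≤ (G.neighborFinset x₀ ∩ A).card + ∑ x ∈ (B \ A).erase x₀,
              (G.neighborFinset x ∩ A).card := by
            refine Nat.add_le_add h3card ?_
            calc 2 * ((B \ A).erase x₀).card = ∑ _x ∈ (B \ A).erase x₀, 2 := by
                  rw [Finset.sum_const, smul_eq_mul, mul_comm]
              _ ≤ _ := Finset.sum_le_sum h2
    have h1 : (edgesIn G A).card + cross.card ≤ (edgesIn G B).card := by
      rw [← Finset.card_union_of_disjoint hdisj]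
      exact Finset.card_le_card hsub
    rw [Finset.card_sdiff_of_subset hAB] at hge
    omega

lemma toFinset_infectIter_subset (G : SimpleGraph V) (S : Set V) (p : ℕ) :
    (Set.toFinite (infectIter G S p)).toFinset ⊆
      (Set.toFinite (infectIter G S (p+1))).toFinset := by
  intro x hx
  rw [Set.Finite.mem_toFinset] at hx ⊢
  exact infectIter_subset_succ G S p hx

lemma lb_invariant (G : SimpleGraph V) (S : Set V) (p : ℕ) :
    2 * (Set.toFinite (infectIter G S p)).toFinset.card ≤
      (edgesIn G (Set.toFinite (infectIter G S p)).toFinset).card +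
      2 * (Set.toFinite (infectIter G S 0)).toFinset.card := by
  induction p with
  | zero => omega
  | succ p ih =>
    have hAB := toFinset_infectIter_subset G S p
    have hnew : ∀ x ∈ (Set.toFinite (infectIter G S (p+1))).toFinset,
        x ∉ (Set.toFinite (infectIter G S p)).toFinset →
        ∃ a b, a ≠ b ∧ a ∈ (Set.toFinite (infectIter G S p)).toFinset ∧
          b ∈ (Set.toFinite (infectIter G S p)).toFinset ∧ G.Adj x a ∧ G.Adj x b := by
      intro x hx hnx
      rw [Set.Finite.mem_toFinset] at hx hnx
      rcases hx with hx | hx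
      · exact absurd hx hnx
      · obtain ⟨a, b, hab, ha, hb, h1, h2⟩ := hx
        exact ⟨a, b, hab, (Set.Finite.mem_toFinset _).2 ha,
          (Set.Finite.mem_toFinset _).2 hb, h1, h2⟩
    have hstep := edgesIn_step_weak G hAB hnew
    have hle := Finset.card_le_card hAB
    omega

theorem lb_generic (G : SimpleGraph V) [Nonempty V]
    (h3 : ∀ x : V, ∃ a b c : V, a ≠ b ∧ a ≠ c ∧ b ≠ c ∧ G.Adj x a ∧ G.Adj x b ∧ G.Adj x c)
    (S : Set V) (hS : IsHullSet G S) :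
    2 * Fintype.card V + 1 ≤ 2 * S.ncard + G.edgeFinset.card := by
  have hScard : S.ncard = (Set.toFinite (infectIter G S 0)).toFinset.card := by
    rw [Set.ncard_eq_toFinset_card']
    congr 1
    ext x
    rw [Set.Finite.mem_toFinset, Set.mem_toFinset]
    rfl
  -- minimal p with infectIter = univ
  have hP := Nat.find_spec hS
  set P := Nat.find hS with hPdef
  have hEuniv : edgesIn G (Finset.univ : Finset V) = G.edgeFinset := by
    refine Finset.filter_true_of_mem ?_
    intro e _
    exact fun y _ => Finset.mem_univ y
  rcases Nat.eq_zero_or_pos P with h0 | hpos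
  · -- S = univ
    rw [h0] at hP
    have hcard : S.ncard = Fintype.card V := by
      rw [hScard]
      have : (Set.toFinite (infectIter G S 0)).toFinset = Finset.univ := by
        ext x
        simp [Set.Finite.mem_toFinset, hP]
      rw [this, Finset.card_univ]
    have hedge : 1 ≤ G.edgeFinset.card := by
      obtain ⟨a, b, c, _, _, _, ha, _, _⟩ := h3 (Classical.arbitrary V)
      refine Finset.card_pos.2 ⟨s(Classical.arbitrary V, a), ?_⟩
      rw [mem_edgeFinset]
      exact ha
    omega
  · obtain ⟨Q, hQ⟩ := Nat.exists_eq_add_of_lt hpos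
    rw [zero_add] at hQ
    have hQlt : Q < P := by omega
    have hQne : infectIter G S Q ≠ Set.univ := Nat.find_min hS (hPdef ▸ hQlt)
    have hQ1 : infectIter G S (Q + 1) = Set.univ := by rw [← hQ]; exact hP
    set A : Finset V := (Set.toFinite (infectIter G S Q)).toFinset with hA
    have hinv := lb_invariant G S Q
    rw [← hA] at hinv
    have hnewuniv : ∀ x ∈ (Finset.univ : Finset V), x ∉ A →
        ∃ a b, a ≠ b ∧ a ∈ A ∧ b ∈ A ∧ G.Adj x a ∧ G.Adj x b := by
      intro x _ hnx
      rw [hA, Set.Finite.mem_toFinset] at hnx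
      have hx1 : x ∈ infectIter G S (Q + 1) := by rw [hQ1]; trivial
      rcases hx1 with hx | hx
      · exact absurd hx hnx
      · obtain ⟨a, b, hab, ha, hb, h1, h2⟩ := hx
        exact ⟨a, b, hab, (Set.Finite.mem_toFinset _).2 ha,
          (Set.Finite.mem_toFinset _).2 hb, h1, h2⟩
    have hx0 : ∃ x₀ : V, x₀ ∉ A := by
      by_contra hall
      push_neg at hall
      apply hQne
      ext x
      simp only [Set.mem_univ, iff_true]
      have := hall x
      rwa [hA, Set.Finite.mem_toFinset] at this
    have hstrict := edgesIn_step_strict G hnewuniv hx0 h3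
    rw [hEuniv, Finset.card_univ] at hstrict
    have hle : A.card ≤ Fintype.card V := by
      rw [← Finset.card_univ]
      exact Finset.card_le_card (Finset.subset_univ A)
    rw [hScard]
    omega

end LB

section Petersen
open SimpleGraph Sum

variable {n k : ℕ} [NeZero n]

abbrev PV (n : ℕ) := (Fin n ⊕ Fin n) ⊕ (Fin n ⊕ Fin n)

def pu (n : ℕ) (b : Bool) (i : Fin n) : PV n :=
  if b then Sum.inr (Sum.inl i) else Sum.inl (Sum.inl i)

def pv (n : ℕ) (b : Bool) (i : Fin n) : PV n :=
  if b then Sum.inr (Sum.inr i) else Sum.inl (Sum.inr i)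

lemma pu_inj {b : Bool} {i j : Fin n} (h : pu n b i = pu n b j) : i = j := by
  cases b <;> simpa [pu] using h

lemma pv_inj {b : Bool} {i j : Fin n} (h : pv n b i = pv n b j) : i = j := by
  cases b <;> simpa [pv] using h

lemma pu_ne_pv (b b' : Bool) (i j : Fin n) : pu n b i ≠ pv n b' j := by
  cases b <;> cases b' <;> simp [pu, pv]

lemma fin_one_ne_zero (hn : 3 ≤ n) : (1 : Fin n) ≠ 0 := by
  have hnt : Nontrivial (Fin n) := Fin.nontrivial_iff_two_le.mpr (by omega)
  intro h
  have := congrArg Fin.val h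
  rw [Fin.val_one', Fin.val_zero, Nat.mod_eq_of_lt (by omega)] at this
  omega

lemma fin_natCast_eq_zero_iff (hn : 3 ≤ n) (a : ℕ) (ha : a < n) :
    ((a : Fin n) = 0) ↔ a = 0 := by
  constructor
  · intro h
    have := congrArg Fin.val h
    rwa [Fin.val_natCast, Nat.mod_eq_of_lt ha, Fin.val_zero] at this
  · rintro rfl; simp

lemma fin_self_ne_add_one (hn : 3 ≤ n) (i : Fin n) : i ≠ i + 1 := by
  intro h
  exact fin_one_ne_zero hn (left_eq_add.mp h)

lemma adj_uu (hn : 3 ≤ n) (b : Bool) (i : Fin n) (hi : i ≠ 0) :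
    (petersenSurgery n k).Adj (pu n b i) (pu n b (i + 1)) := by
  have h1 : i ≠ i + 1 := fin_self_ne_add_one hn i
  have h2 : i = 1 → i + 1 ≠ 0 := by
    rintro rfl h
    have : ((2 : ℕ) : Fin n) = 0 := by push_cast; exact_mod_cast h
    rw [fin_natCast_eq_zero_iff hn 2 (by omega)] at this
    omega
  have hgen : (genPetersen n k).Adj (Sum.inl i) (Sum.inl (i + 1)) := by
    rw [genPetersen, fromRel_adj]
    exact ⟨by simp [h1], Or.inl rfl⟩
  have hdel : ¬(((Sum.inl i : Fin n ⊕ Fin n) = Sum.inl 0 ∧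
        (Sum.inl (i+1) : Fin n ⊕ Fin n) = Sum.inl 1) ∨
      ((Sum.inl i : Fin n ⊕ Fin n) = Sum.inl 1 ∧
        (Sum.inl (i+1) : Fin n ⊕ Fin n) = Sum.inl 0)) := by
    simp only [Sum.inl.injEq]
    rintro (⟨h3, _⟩ | ⟨h3, h4⟩)
    · exact hi h3
    · exact h2 h3 h4
  cases b <;>
  · rw [petersenSurgery, fromRel_adj]
    exact ⟨by simp [pu, h1], Or.inl ⟨hgen, hdel⟩⟩

lemma adj_uv (hn : 3 ≤ n) (b : Bool) (i : Fin n) :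
    (petersenSurgery n k).Adj (pu n b i) (pv n b i) := by
  have hgen : (genPetersen n k).Adj (Sum.inl i) (Sum.inr i) := by
    rw [genPetersen, fromRel_adj]
    exact ⟨by simp, Or.inl rfl⟩
  cases b <;>
  · rw [petersenSurgery, fromRel_adj]
    exact ⟨by simp [pu, pv], Or.inl ⟨hgen, by simp⟩⟩

lemma adj_vv (hn : 3 ≤ n) (hk1 : 1 ≤ k) (hkn : k < n) (b : Bool) (i : Fin n) :
    (petersenSurgery n k).Adj (pv n b i) (pv n b (i + (k : Fin n))) := by
  have hka : ((k : Fin n)) ≠ 0 := by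
    intro h
    rw [fin_natCast_eq_zero_iff hn k hkn] at h
    omega
  have h1 : i ≠ i + (k : Fin n) := by
    intro h
    exact hka (left_eq_add.mp h)
  have hgen : (genPetersen n k).Adj (Sum.inr i) (Sum.inr (i + (k : Fin n))) := by
    rw [genPetersen, fromRel_adj]
    exact ⟨by simp [h1], Or.inl rfl⟩
  cases b <;>
  · rw [petersenSurgery, fromRel_adj]
    exact ⟨by simp [pv, h1], Or.inl ⟨hgen, by simp⟩⟩

lemma adj_cross (hn : 3 ≤ n) (i : Fin n) (hi : i = 0 ∨ i = 1) :
    (petersenSurgery n k).Adj (pu n false i) (pu n true i) := by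
  rw [petersenSurgery, fromRel_adj]
  refine ⟨by simp [pu], Or.inl ?_⟩
  rcases hi with rfl | rfl
  · exact Or.inl ⟨rfl, rfl⟩
  · exact Or.inr ⟨rfl, rfl⟩

end Petersen

section Petersen2
open SimpleGraph Sum

variable {n k : ℕ} [NeZero n]

@[simp] lemma pu_false (i : Fin n) : pu n false i = Sum.inl (Sum.inl i) := rfl
@[simp] lemma pu_true (i : Fin n) : pu n true i = Sum.inr (Sum.inl i) := rfl
@[simp] lemma pv_false (i : Fin n) : pv n false i = Sum.inl (Sum.inr i) := rfl
@[simp] lemma pv_true (i : Fin n) : pv n true i = Sum.inr (Sum.inr i) := rfl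

lemma pu_ne_pu_bool {b b' : Bool} (h : b ≠ b') (i j : Fin n) : pu n b i ≠ pu n b' j := by
  cases b <;> cases b' <;> simp_all

lemma fin_two_ne_zero (hn : 3 ≤ n) : ((2 : ℕ) : Fin n) ≠ 0 := by
  intro h
  rw [fin_natCast_eq_zero_iff hn 2 (by omega)] at h
  omega

lemma sub_one_ne_add_one (hn : 3 ≤ n) (i : Fin n) : i - 1 ≠ i + 1 := by
  intro h
  have h2 : (i + 1) - (i - 1) = 0 := by rw [← h]; ring
  have h3 : (i + 1) - (i - 1) = ((2 : ℕ) : Fin n) := by push_cast; ring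
  rw [h3] at h2
  exact fin_two_ne_zero hn h2

lemma h3u (hn : 3 ≤ n) (hk1 : 1 ≤ k) (hk2 : 2 * k < n) (b : Bool) (i : Fin n) :
    ∃ a c d : PV n, a ≠ c ∧ a ≠ d ∧ c ≠ d ∧ (petersenSurgery n k).Adj (pu n b i) a ∧
      (petersenSurgery n k).Adj (pu n b i) c ∧ (petersenSurgery n k).Adj (pu n b i) d := by
  by_cases h0 : i = 0 ∨ i = 1
  · -- neighbors: u (i±1) [the legal one], v i, cross
    have hcross : (petersenSurgery n k).Adj (pu n b i) (pu n (!b) i) := by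
      cases b
      · exact adj_cross hn i h0
      · exact (adj_cross hn i h0).symm
    rcases h0 with rfl | rfl
    · -- u 0 : use u (0-1) = u (-1)
      have hm1 : (-1 : Fin n) ≠ 0 := by
        intro h
        have : (1 : Fin n) = 0 := by rw [← neg_eq_zero]; exact h
        exact fin_one_ne_zero hn this
      have huu := adj_uu (n := n) (k := k) hn b (-1) hm1
      rw [show (-1 : Fin n) + 1 = 0 by ring] at huu
      exact ⟨pu n b (-1), pv n b 0, pu n (!b) 0,
        pu_ne_pv _ _ _ _,
        pu_ne_pu_bool (by cases b <;> simp) _ _,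
        (pu_ne_pv (!b) b 0 0).symm,
        huu.symm, adj_uv hn b 0, hcross⟩
    · have huu := adj_uu (n := n) (k := k) hn b 1 (fin_one_ne_zero hn)
      exact ⟨pu n b (1 + 1), pv n b 1, pu n (!b) 1,
        pu_ne_pv _ _ _ _,
        pu_ne_pu_bool (by cases b <;> simp) _ _,
        (pu_ne_pv (!b) b 1 1).symm,
        huu, adj_uv hn b 1, hcross⟩
  · push_neg at h0
    obtain ⟨h00, h01⟩ := h0
    have him1 : i - 1 ≠ 0 := by
      intro h
      apply h01
      have : i = 0 + 1 := by rw [← h]; ring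
      simpa using this
    have huu1 := adj_uu (n := n) (k := k) hn b (i - 1) him1
    rw [show i - 1 + 1 = i by ring] at huu1
    have huu2 := adj_uu (n := n) (k := k) hn b i h00
    exact ⟨pu n b (i - 1), pu n b (i + 1), pv n b i,
      fun h => sub_one_ne_add_one hn i (pu_inj h),
      pu_ne_pv _ _ _ _, pu_ne_pv _ _ _ _,
      huu1.symm, huu2, adj_uv hn b i⟩

lemma two_k_ne_zero (hn : 3 ≤ n) (hk1 : 1 ≤ k) (hk2 : 2 * k < n) :
    ((k : Fin n)) + ((k : Fin n)) ≠ 0 := by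
  intro h
  have h1 : (((2 * k : ℕ)) : Fin n) = 0 := by push_cast; rw [two_mul]; exact h
  rw [fin_natCast_eq_zero_iff hn (2 * k) hk2] at h1
  omega

lemma h3v (hn : 3 ≤ n) (hk1 : 1 ≤ k) (hk2 : 2 * k < n) (b : Bool) (i : Fin n) :
    ∃ a c d : PV n, a ≠ c ∧ a ≠ d ∧ c ≠ d ∧ (petersenSurgery n k).Adj (pv n b i) a ∧
      (petersenSurgery n k).Adj (pv n b i) c ∧ (petersenSurgery n k).Adj (pv n b i) d := by
  have hkn : k < n := by omega
  have hvv1 := adj_vv (n := n) hn hk1 hkn b (i - (k : Fin n))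
  rw [show i - (k : Fin n) + (k : Fin n) = i by ring] at hvv1
  have hvv2 := adj_vv (n := n) hn hk1 hkn b i
  refine ⟨pv n b (i - (k : Fin n)), pv n b (i + (k : Fin n)), pu n b i, ?_,
    (pu_ne_pv _ _ _ _).symm, (pu_ne_pv _ _ _ _).symm,
    hvv1.symm, hvv2, (adj_uv hn b i).symm⟩
  intro h
  have := pv_inj h
  have h2 : (i + (k : Fin n)) - (i - (k : Fin n)) = 0 := by rw [← this]; ring
  apply two_k_ne_zero hn hk1 hk2
  rw [← h2]; ring

lemma h3all (hn : 3 ≤ n) (hk1 : 1 ≤ k) (hk2 : 2 * k < n) :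
    ∀ x : PV n, ∃ a c d : PV n, a ≠ c ∧ a ≠ d ∧ c ≠ d ∧ (petersenSurgery n k).Adj x a ∧
      (petersenSurgery n k).Adj x c ∧ (petersenSurgery n k).Adj x d := by
  intro x
  rcases x with (i | i) | (i | i)
  · exact h3u hn hk1 hk2 false i
  · exact h3v hn hk1 hk2 false i
  · exact h3u hn hk1 hk2 true i
  · exact h3v hn hk1 hk2 true i

end Petersen2

section EdgeCount
open SimpleGraph Sum
attribute [local instance] Classical.propDecidable

variable {n k : ℕ} [NeZero n]

noncomputable def gfun (n k : ℕ) [NeZero n] (p : Bool × Fin 3 × Fin n) : Sym2 (PV n) :=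
  match p with
  | (b, ⟨0, _⟩, i) =>
      if i = 0 then (if b then s(Sum.inl (Sum.inl 1), Sum.inr (Sum.inl 1))
        else s(Sum.inl (Sum.inl 0), Sum.inr (Sum.inl 0)))
      else s(pu n b i, pu n b (i + 1))
  | (b, ⟨1, _⟩, i) => s(pu n b i, pv n b i)
  | (b, ⟨2, _⟩, i) => s(pv n b i, pv n b (i + (k : Fin n)))

lemma gen_adj_char {x y : Fin n ⊕ Fin n} (h : (genPetersen n k).Adj x y) :
    (∃ i j : Fin n, x = Sum.inl i ∧ y = Sum.inl j ∧ (j = i + 1 ∨ i = j + 1)) ∨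
    (∃ i : Fin n, x = Sum.inl i ∧ y = Sum.inr i) ∨
    (∃ i : Fin n, x = Sum.inr i ∧ y = Sum.inl i) ∨
    (∃ i j : Fin n, x = Sum.inr i ∧ y = Sum.inr j ∧
      (j = i + (k : Fin n) ∨ i = j + (k : Fin n))) := by
  rw [genPetersen, fromRel_adj] at h
  obtain ⟨-, h⟩ := h
  rcases x with i | i <;> rcases y with j | j
  · rcases h with h | h
    · exact Or.inl ⟨i, j, rfl, rfl, Or.inl h⟩
    · exact Or.inl ⟨i, j, rfl, rfl, Or.inr h⟩
  · rcases h with h | h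
    · exact Or.inr (Or.inl ⟨i, rfl, by rw [h]⟩)
    · exact h.elim
  · rcases h with h | h
    · exact h.elim
    · exact Or.inr (Or.inr (Or.inl ⟨j, by rw [h], rfl⟩))
  · rcases h with h | h
    · exact Or.inr (Or.inr (Or.inr ⟨i, j, rfl, rfl, Or.inl h⟩))
    · exact Or.inr (Or.inr (Or.inr ⟨i, j, rfl, rfl, Or.inr h⟩))

lemma cover_copy (hn : 3 ≤ n) (b : Bool) {a c : Fin n ⊕ Fin n}
    (hadj : (genPetersen n k).Adj a c)
    (hdel : ¬((a = Sum.inl 0 ∧ c = Sum.inl 1) ∨ (a = Sum.inl 1 ∧ c = Sum.inl 0))) :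
    ∃ p : Bool × Fin 3 × Fin n, gfun n k p =
      s((if b then Sum.inr a else Sum.inl a : PV n), (if b then Sum.inr c else Sum.inl c)) := by
  have hmk : ∀ i : Fin n, (if b then Sum.inr (Sum.inl i) else Sum.inl (Sum.inl i) : PV n)
      = pu n b i := by intro i; cases b <;> rfl
  have hmkv : ∀ i : Fin n, (if b then Sum.inr (Sum.inr i) else Sum.inl (Sum.inr i) : PV n)
      = pv n b i := by intro i; cases b <;> rfl
  rcases gen_adj_char hadj with ⟨i, j, rfl, rfl, hij⟩ | ⟨i, rfl, rfl⟩ |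
    ⟨i, rfl, rfl⟩ | ⟨i, j, rfl, rfl, hij⟩
  · rcases hij with rfl | rfl
    · -- j = i + 1 : need i ≠ 0
      have hi0 : i ≠ 0 := by
        rintro rfl
        exact hdel (Or.inl ⟨rfl, by norm_num⟩)
      refine ⟨(b, ⟨0, by omega⟩, i), ?_⟩
      rw [gfun, if_neg hi0, hmk, hmk]
    · -- i = j + 1 : need j ≠ 0
      have hj0 : j ≠ 0 := by
        rintro rfl
        exact hdel (Or.inr ⟨by norm_num, rfl⟩)
      refine ⟨(b, ⟨0, by omega⟩, j), ?_⟩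
      rw [gfun, if_neg hj0, hmk, hmk, Sym2.eq_swap]
  · exact ⟨(b, ⟨1, by omega⟩, i), by rw [gfun, hmk, hmkv]⟩
  · exact ⟨(b, ⟨1, by omega⟩, i), by rw [gfun, hmk, hmkv, Sym2.eq_swap]⟩
  · rcases hij with rfl | rfl
    · exact ⟨(b, ⟨2, by omega⟩, i), by rw [gfun, hmkv, hmkv]⟩
    · exact ⟨(b, ⟨2, by omega⟩, j), by rw [gfun, hmkv, hmkv, Sym2.eq_swap]⟩

lemma edge_cover (hn : 3 ≤ n) :
    ∀ x y : PV n, (petersenSurgery n k).Adj x y →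
      ∃ p : Bool × Fin 3 × Fin n, gfun n k p = s(x, y) := by
  intro x y h
  rw [petersenSurgery, fromRel_adj] at h
  obtain ⟨hne, h⟩ := h
  rcases x with a | a <;> rcases y with c | c
  · rcases h with ⟨hadj, hdel⟩ | ⟨hadj, hdel⟩
    · exact cover_copy hn false hadj hdel
    · obtain ⟨p, hp⟩ := cover_copy (k := k) hn false hadj hdel
      exact ⟨p, by rw [hp]; simp [Sym2.eq_swap]⟩
  · -- cross edges from inl to inr
    rcases h with h | h
    · rcases h with ⟨rfl, rfl⟩ | ⟨rfl, rfl⟩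
      · exact ⟨(false, ⟨0, by omega⟩, 0), by rw [gfun, if_pos rfl]; simp⟩
      · exact ⟨(true, ⟨0, by omega⟩, 0), by rw [gfun, if_pos rfl]; simp⟩
    · exact h.elim
  · rcases h with h | h
    · exact h.elim
    · rcases h with ⟨rfl, rfl⟩ | ⟨rfl, rfl⟩
      · exact ⟨(false, ⟨0, by omega⟩, 0),
          by rw [gfun, if_pos rfl]; simp [Sym2.eq_swap]⟩
      · exact ⟨(true, ⟨0, by omega⟩, 0),
          by rw [gfun, if_pos rfl]; simp [Sym2.eq_swap]⟩
  · rcases h with ⟨hadj, hdel⟩ | ⟨hadj, hdel⟩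
    · exact cover_copy hn true hadj hdel
    · obtain ⟨p, hp⟩ := cover_copy (k := k) hn true hadj hdel
      exact ⟨p, by rw [hp]; simp [Sym2.eq_swap]⟩

lemma edge_card_le (hn : 3 ≤ n) :
    (petersenSurgery n k).edgeFinset.card ≤ 6 * n := by
  have hsub : (petersenSurgery n k).edgeFinset ⊆
      Finset.image (gfun n k) Finset.univ := by
    intro e he
    induction e with
    | _ x y =>
      rw [mem_edgeFinset] at he
      obtain ⟨p, hp⟩ := edge_cover hn x y he
      exact Finset.mem_image.2 ⟨p, Finset.mem_univ p, hp⟩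
  calc (petersenSurgery n k).edgeFinset.card
      ≤ (Finset.image (gfun n k) Finset.univ).card := Finset.card_le_card hsub
    _ ≤ (Finset.univ : Finset (Bool × Fin 3 × Fin n)).card := Finset.card_image_le
    _ = 6 * n := by simp [Finset.card_univ]; ring

end EdgeCount

section LBPetersen
open SimpleGraph Sum
attribute [local instance] Classical.propDecidable

lemma lb_petersen {n k : ℕ} [NeZero n] (hn : 3 ≤ n) (hk1 : 1 ≤ k) (hk2 : 2 * k < n)
    (S : Set (PV n)) (hS : IsHullSet (petersenSurgery n k) S) : n + 1 ≤ S.ncard := by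
  have hne : Nonempty (PV n) := by
    have : 0 < n := by omega
    exact ⟨Sum.inl (Sum.inl ⟨0, this⟩)⟩
  have hlb := lb_generic (petersenSurgery n k) (h3all hn hk1 hk2) S hS
  have hcard : Fintype.card (PV n) = 4 * n := by
    simp [Fintype.card_sum, Fintype.card_fin]
    ring
  have hedge := edge_card_le (n := n) (k := k) hn
  rw [hcard] at hlb
  omega

end LBPetersen

section Engine
open SimpleGraph
attribute [local instance] Classical.propDecidable

variable {n : ℕ} [NeZero n]

lemma fin_cast_eq_of_modEq {a b : ℕ} (h : a ≡ b [MOD n]) : (a : Fin n) = (b : Fin n) := by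
  apply Fin.val_injective
  rw [Fin.val_natCast, Fin.val_natCast]
  exact h

lemma fin_add_cast (x : Fin n) (c : ℕ) : x + (c : Fin n) = ((x.val + c : ℕ) : Fin n) := by
  apply Fin.val_injective
  simp only [Fin.add_def, Fin.val_natCast]
  conv_rhs => rw [Nat.add_mod]
  rw [Nat.mod_eq_of_lt x.isLt]

lemma res_add {d : ℕ} (hdn : d ∣ n) (x : Fin n) {c : ℕ} (hdc : d ∣ c) :
    (x + (c : Fin n)).val % d = x.val % d := by
  rw [fin_add_cast, Fin.val_natCast]
  rw [Nat.mod_mod_of_dvd _ hdn]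
  obtain ⟨e, rfl⟩ := hdc
  rw [Nat.add_mul_mod_self_left]

lemma res_sub {d : ℕ} (hdn : d ∣ n) (x : Fin n) {c : ℕ} (hdc : d ∣ c) :
    (x - (c : Fin n)).val % d = x.val % d := by
  have h := res_add hdn (x - (c : Fin n)) hdc
  rw [sub_add_cancel] at h
  exact h.symm

lemma nat_reach (k c : ℕ) (hn : 0 < n) (hdvd : n.gcd k ∣ c) :
    ∃ t : ℕ, t * k ≡ c [MOD n] := by
  obtain ⟨m, hm⟩ := hdvd
  set A := Nat.gcdA n k with hA
  set B := Nat.gcdB n k with hB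
  have hbez : (Nat.gcd n k : ℤ) = n * A + k * B := Nat.gcd_eq_gcd_ab n k
  have hnz : (n : ℤ) ≠ 0 := by exact_mod_cast hn.ne'
  set t0 : ℤ := B * m with ht0
  have hkey : (n : ℤ) ∣ (c : ℤ) - t0 * k := by
    refine ⟨A * m, ?_⟩
    have hc : (c : ℤ) = (Nat.gcd n k : ℤ) * m := by exact_mod_cast hm
    rw [hc, hbez, ht0]
    ring
  refine ⟨(t0 % n).toNat, ?_⟩
  have hnonneg : 0 ≤ t0 % n := Int.emod_nonneg t0 hnz
  have hcast : ((t0 % n).toNat : ℤ) = t0 % n := Int.toNat_of_nonneg hnonneg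
  rw [Nat.modEq_iff_dvd]
  push_cast
  rw [hcast]
  have h3 : (n : ℤ) ∣ (t0 - t0 % n) * k := by
    have he : t0 - t0 % n = n * (t0 / n) := by rw [Int.emod_def]; ring
    rw [he]
    exact ⟨(t0 / n) * k, by ring⟩
  have h4 := dvd_add hkey h3
  convert h4 using 1
  · rfl
  · ring

lemma fin_reach {d k : ℕ} (hd : d = n.gcd k) (x y : Fin n)
    (h : x.val % d = y.val % d) :
    ∃ t : ℕ, x + ((t * k : ℕ) : Fin n) = y := by
  have hn : 0 < n := Nat.pos_of_ne_zero (NeZero.ne n)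
  have hdn : d ∣ n := hd ▸ Nat.gcd_dvd_left n k
  have hxn : x.val ≤ n := le_of_lt x.isLt
  set c := y.val + n - x.val with hc
  have hdvd : n.gcd k ∣ c := by
    rw [← hd]
    have h2 : c + x.val ≡ 0 + x.val [MOD d] := by
      have he : c + x.val = y.val + n := by omega
      rw [he, zero_add]
      calc y.val + n ≡ y.val + 0 [MOD d] :=
            Nat.ModEq.add_left _ ((Nat.modEq_zero_iff_dvd).2 hdn)
        _ = y.val := add_zero _
        _ ≡ x.val [MOD d] := Nat.ModEq.symm h
    have h3 : c ≡ 0 [MOD d] := Nat.ModEq.add_right_cancel' x.val h2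
    exact (Nat.modEq_zero_iff_dvd).1 h3
  obtain ⟨t, ht⟩ := nat_reach k c hn hdvd
  refine ⟨t, ?_⟩
  rw [fin_add_cast]
  have h5 : x.val + t * k ≡ y.val [MOD n] := by
    calc x.val + t * k ≡ x.val + c [MOD n] := Nat.ModEq.add_left _ ht
      _ = y.val + n := by omega
      _ ≡ y.val + 0 [MOD n] := Nat.ModEq.add_left _ ((Nat.modEq_zero_iff_dvd).2 dvd_rfl)
      _ = y.val := add_zero _
  rw [fin_cast_eq_of_modEq h5, Fin.cast_val_eq_self]

end Engine

section EngineMain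
open SimpleGraph
attribute [local instance] Classical.propDecidable

variable {n : ℕ} [NeZero n]

lemma engine {V : Type*} {G : SimpleGraph V} {T : Set V} {k d : ℕ}
    (hn : 3 ≤ n) (hk1 : 1 ≤ k) (hk2 : 2 * k < n) (hd : d = n.gcd k)
    {u v : Fin n → V}
    (hclosed : ∀ x a b : V, a ≠ b → a ∈ T → b ∈ T → G.Adj x a → G.Adj x b → x ∈ T)
    (hadj_uu : ∀ i : Fin n, i ≠ 0 → G.Adj (u i) (u (i + 1)))
    (hadj_uv : ∀ i : Fin n, G.Adj (u i) (v i))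
    (hadj_vv : ∀ i : Fin n, G.Adj (v i) (v (i + (k : Fin n))))
    (hv_inj : Function.Injective v)
    (huv : ∀ i j : Fin n, u i ≠ v j)
    (huT : ∀ x : ℕ, 1 ≤ x → x ≤ n - d → u ((x : ℕ) : Fin n) ∈ T)
    (a0 : ℕ) (hrun : ∀ j : ℕ, j < d → v (((a0 + j : ℕ)) : Fin n) ∈ T) :
    ∀ i : Fin n, u i ∈ T ∧ v i ∈ T := by
  have hdn : d ∣ n := hd ▸ Nat.gcd_dvd_left n k
  have hdk : d ∣ k := hd ▸ Nat.gcd_dvd_right n k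
  have hd1 : 1 ≤ d := hd ▸ Nat.gcd_pos_of_pos_left k (by omega)
  have hdk' : d ≤ k := Nat.le_of_dvd (by omega) hdk
  have h3d : 3 * d ≤ n := by
    obtain ⟨L, hL⟩ := hdn
    have hL3 : 3 ≤ L := by
      by_contra hcon
      push_neg at hcon
      have : d * L ≤ d * 2 := Nat.mul_le_mul_left d (by omega)
      omega
    calc 3 * d = d * 3 := by ring
      _ ≤ d * L := Nat.mul_le_mul_left d hL3
      _ = n := hL.symm
  -- All inner vertices get infected
  have allV : ∀ y : Fin n, v y ∈ T := by
    by_contra hny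
    push_neg at hny
    obtain ⟨y, hy⟩ := hny
    -- find the seed with matching residue
    set r := a0 % d with hr
    have hrd : r < d := Nat.mod_lt _ (by omega)
    set j := (y.val % d + d - r) % d with hj
    have hjd : j < d := Nat.mod_lt _ (by omega)
    have hres : (a0 + j) % d = y.val % d := by
      have h1 : a0 + j ≡ r + (y.val % d + d - r) [MOD d] :=
        Nat.ModEq.add (Nat.mod_modEq a0 d).symm (Nat.mod_modEq _ d)
      have h2 : r + (y.val % d + d - r) = y.val % d + d := by omega
      have h3 : y.val % d + d ≡ y.val % d + 0 [MOD d] :=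
        Nat.ModEq.add_left _ ((Nat.modEq_zero_iff_dvd).2 dvd_rfl)
      have h4 : y.val % d ≡ y.val [MOD d] := Nat.mod_modEq y.val d
      calc a0 + j ≡ r + (y.val % d + d - r) [MOD d] := h1
        _ = y.val % d + d := h2
        _ ≡ y.val % d + 0 [MOD d] := h3
        _ = y.val % d := add_zero _
        _ ≡ y.val [MOD d] := h4
    set s : Fin n := ((a0 + j : ℕ) : Fin n) with hs
    have hsT : v s ∈ T := hrun j hjd
    have hress : s.val % d = y.val % d := by
      rw [hs, Fin.val_natCast, Nat.mod_mod_of_dvd _ hdn]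
      exact hres
    -- walk upwards
    have walkup : ∀ y' : Fin n, v y' ∉ T → y'.val % d = y.val % d →
        ∃ w : Fin n, w.val % d = y.val % d ∧ v w ∉ T ∧ u w ∉ T ∧
          v (w - (k : Fin n)) ∉ T ∧ v (w + (k : Fin n)) ∈ T := by
      intro y' hy' hyres
      have hex : ∃ i : ℕ, v (y' + ((i * k : ℕ) : Fin n)) ∈ T := by
        obtain ⟨t, ht⟩ := fin_reach hd y' s (by rw [hyres, hress])
        exact ⟨t, by rw [ht]; exact hsT⟩
      set i1 := Nat.find hex with hi1
      have hspec : v (y' + ((i1 * k : ℕ) : Fin n)) ∈ T := Nat.find_spec hex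
      have hi1pos : 1 ≤ i1 := by
        rcases Nat.eq_zero_or_pos i1 with h0 | hp
        · exfalso
          apply hy'
          have h5 := hspec
          rw [h0] at h5
          simpa using h5
        · exact hp
      set w := y' + (((i1 - 1) * k : ℕ) : Fin n) with hw
      have hwplus : w + (k : Fin n) = y' + ((i1 * k : ℕ) : Fin n) := by
        rw [hw, add_assoc, ← Nat.cast_add]
        congr 2
        have h5 : i1 = (i1 - 1) + 1 := by omega
        conv_rhs => rw [h5]
        rw [Nat.succ_mul]
      have hwbad : v w ∉ T := Nat.find_min hex (by omega : i1 - 1 < i1)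
      have hwkT : v (w + (k : Fin n)) ∈ T := by rw [hwplus]; exact hspec
      have hwu : u w ∉ T := by
        intro huw
        exact hwbad (hclosed (v w) (u w) (v (w + (k : Fin n)))
          (huv w _) huw hwkT (hadj_uv w).symm (hadj_vv w))
      have hwmk : v (w - (k : Fin n)) ∉ T := by
        intro hm
        apply hwbad
        refine hclosed (v w) (v (w - (k : Fin n))) (v (w + (k : Fin n)))
          ?_ hm hwkT ?_ (hadj_vv w)
        · intro he
          have heq := hv_inj he
          have h0 : (k : Fin n) + (k : Fin n) = (w + (k : Fin n)) - (w - (k : Fin n)) := by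
            ring
          rw [← heq, sub_self] at h0
          exact two_k_ne_zero hn hk1 hk2 h0
        · have h6 := hadj_vv (w - (k : Fin n))
          rw [sub_add_cancel] at h6
          exact h6.symm
      have hwres : w.val % d = y.val % d := by
        rw [hw, res_add hdn y' (hdk.mul_left (i1 - 1))]
        exact hyres
      exact ⟨w, hwres, hwbad, hwu, hwmk, hwkT⟩
    -- walk downwards
    have walkdown : ∀ y' : Fin n, v y' ∉ T → y'.val % d = y.val % d →
        ∃ w : Fin n, w.val % d = y.val % d ∧ v w ∉ T ∧ u w ∉ T ∧
          v (w + (k : Fin n)) ∉ T ∧ v (w - (k : Fin n)) ∈ T := by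
      intro y' hy' hyres
      have hex : ∃ i : ℕ, v (y' - ((i * k : ℕ) : Fin n)) ∈ T := by
        obtain ⟨t, ht⟩ := fin_reach hd s y' (by rw [hress, hyres])
        refine ⟨t, ?_⟩
        have h5 : y' - ((t * k : ℕ) : Fin n) = s := by rw [← ht]; ring
        rw [h5]
        exact hsT
      set i1 := Nat.find hex with hi1
      have hspec : v (y' - ((i1 * k : ℕ) : Fin n)) ∈ T := Nat.find_spec hex
      have hi1pos : 1 ≤ i1 := by
        rcases Nat.eq_zero_or_pos i1 with h0 | hp
        · exfalso
          apply hy'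
          have h5 := hspec
          rw [h0] at h5
          simpa using h5
        · exact hp
      set w := y' - (((i1 - 1) * k : ℕ) : Fin n) with hw
      have hwminus : w - (k : Fin n) = y' - ((i1 * k : ℕ) : Fin n) := by
        rw [hw, sub_sub, ← Nat.cast_add]
        congr 2
        have h5 : i1 = (i1 - 1) + 1 := by omega
        conv_rhs => rw [h5]
        rw [Nat.succ_mul]
      have hwbad : v w ∉ T := Nat.find_min hex (by omega : i1 - 1 < i1)
      have hwkT : v (w - (k : Fin n)) ∈ T := by rw [hwminus]; exact hspec
      have hwu : u w ∉ T := by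
        intro huw
        have h6 := hadj_vv (w - (k : Fin n))
        rw [sub_add_cancel] at h6
        exact hwbad (hclosed (v w) (u w) (v (w - (k : Fin n)))
          (huv w _) huw hwkT (hadj_uv w).symm h6.symm)
      have hwpk : v (w + (k : Fin n)) ∉ T := by
        intro hm
        apply hwbad
        refine hclosed (v w) (v (w - (k : Fin n))) (v (w + (k : Fin n)))
          ?_ hwkT hm ?_ (hadj_vv w)
        · intro he
          have heq := hv_inj he
          have h0 : (k : Fin n) + (k : Fin n) = (w + (k : Fin n)) - (w - (k : Fin n)) := by
            ring
          rw [← heq, sub_self] at h0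
          exact two_k_ne_zero hn hk1 hk2 h0
        · have h6 := hadj_vv (w - (k : Fin n))
          rw [sub_add_cancel] at h6
          exact h6.symm
      have hwres : w.val % d = y.val % d := by
        rw [hw, res_sub hdn y' (hdk.mul_left (i1 - 1))]
        exact hyres
      exact ⟨w, hwres, hwbad, hwu, hwpk, hwkT⟩
    -- combine
    obtain ⟨w, hwres, hwbad, hwu, hwmk, hwkT⟩ := walkup y hy rfl
    have hy2res : (w - (k : Fin n)).val % d = y.val % d := by
      rw [res_sub hdn w hdk]
      exact hwres
    obtain ⟨w2, hw2res, hw2bad, hw2u, hw2pk, hw2mk⟩ := walkdown _ hwmk hy2res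
    -- uniqueness of unsupported positions in a residue class
    have hnot : ∀ z : Fin n, u z ∉ T → z.val = 0 ∨ n - d < z.val := by
      intro z hz
      by_contra hcon
      push_neg at hcon
      obtain ⟨h0, h1⟩ := hcon
      apply hz
      have h5 := huT z.val (by omega) h1
      rwa [Fin.cast_val_eq_self] at h5
    have hzw := hnot w hwu
    have hzw2 := hnot w2 hw2u
    have hwlt : w.val < n := w.isLt
    have hw2lt : w2.val < n := w2.isLt
    have hres2 : w2.val % d = w.val % d := by rw [hw2res, hwres]
    have hwindow : ∀ z1 z2 : ℕ, z1 % d = 0 → n - d < z2 → z2 < n → z2 % d = 0 → False := by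
      intro z1 z2 _ hgt hlt hmod
      obtain ⟨e, he⟩ := (Nat.modEq_zero_iff_dvd).1 hmod
      obtain ⟨L, hL⟩ := hdn
      have h7 : n < d * (e + 1) := by rw [Nat.mul_succ]; omega
      have h8 : d * e < d * L := by omega
      have h9 : L < e + 1 := Nat.lt_of_mul_lt_mul_left (hL ▸ h7)
      have h10 : e < L := Nat.lt_of_mul_lt_mul_left h8
      omega
    have hval : w2.val = w.val := by
      rcases hzw with h | h <;> rcases hzw2 with h' | h'
      · omega
      · exfalso
        have hm : w2.val % d = 0 := by rw [hres2, h, Nat.zero_mod]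
        exact hwindow w.val w2.val (by rw [h, Nat.zero_mod]) h' hw2lt hm
      · exfalso
        have hm : w.val % d = 0 := by rw [← hres2, h', Nat.zero_mod]
        exact hwindow w2.val w.val (by rw [h', Nat.zero_mod]) h hwlt hm
      · -- both in window
        rcases le_total w2.val w.val with hle | hle
        · have hdvd : d ∣ w.val - w2.val := (Nat.modEq_iff_dvd' hle).1 hres2
          rcases Nat.eq_zero_or_pos (w.val - w2.val) with h0 | hp
          · omega
          · have := Nat.le_of_dvd hp hdvd
            omega
        · have hdvd : d ∣ w2.val - w.val := (Nat.modEq_iff_dvd' hle).1 hres2.symm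
          rcases Nat.eq_zero_or_pos (w2.val - w.val) with h0 | hp
          · omega
          · have := Nat.le_of_dvd hp hdvd
            omega
    have huniq : w2 = w := Fin.val_injective hval
    rw [huniq] at hw2pk
    exact hw2pk hwkT
  -- all rim vertices get infected
  have allU1 : ∀ x : ℕ, 1 ≤ x → x < n → u ((x : ℕ) : Fin n) ∈ T := by
    intro x
    induction x using Nat.strong_induction_on with
    | _ x ih =>
      intro h1 hx
      by_cases hle : x ≤ n - d
      · exact huT x h1 hle
      · have hprev : u (((x - 1 : ℕ)) : Fin n) ∈ T := ih (x - 1) (by omega) (by omega) (by omega)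
        refine hclosed _ (u ((x - 1 : ℕ) : Fin n)) (v ((x : ℕ) : Fin n)) (huv _ _)
          hprev (allV _) ?_ (hadj_uv _)
        have hne0 : ((x - 1 : ℕ) : Fin n) ≠ 0 := by
          intro h
          rw [fin_natCast_eq_zero_iff hn (x - 1) (by omega)] at h
          omega
        have h6 := hadj_uu _ hne0
        have hcast : ((x - 1 : ℕ) : Fin n) + 1 = ((x : ℕ) : Fin n) := by
          rw [show (1 : Fin n) = ((1 : ℕ) : Fin n) by rw [Nat.cast_one], ← Nat.cast_add]
          congr 1
          omega
        rw [hcast] at h6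
        exact h6.symm
  have allU : ∀ i : Fin n, u i ∈ T := by
    intro i
    by_cases h0 : i = 0
    · subst h0
      have hprev : u ((n - 1 : ℕ) : Fin n) ∈ T := allU1 (n - 1) (by omega) (by omega)
      refine hclosed _ (u ((n - 1 : ℕ) : Fin n)) (v 0) (huv _ _) hprev (allV 0)
        ?_ (hadj_uv 0)
      have hne0 : ((n - 1 : ℕ) : Fin n) ≠ 0 := by
        intro h
        rw [fin_natCast_eq_zero_iff hn (n - 1) (by omega)] at h
        omega
      have h6 := hadj_uu _ hne0
      have hcast : ((n - 1 : ℕ) : Fin n) + 1 = (0 : Fin n) := by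
        rw [show (1 : Fin n) = ((1 : ℕ) : Fin n) by rw [Nat.cast_one], ← Nat.cast_add]
        rw [show n - 1 + 1 = n by omega]
        exact Fin.natCast_self n
      rw [hcast] at h6
      exact h6.symm
    · have hv1 : i.val ≠ 0 := by
        intro h
        exact h0 (Fin.val_injective (by rw [h, Fin.val_zero]))
      have h5 := allU1 i.val (by omega) i.isLt
      rwa [Fin.cast_val_eq_self] at h5
  exact fun i => ⟨allU i, allV i⟩

end EngineMain

section PhaseA
open SimpleGraph
attribute [local instance] Classical.propDecidable

variable {n : ℕ} [NeZero n]

lemma fin_cast_ne (hn : 3 ≤ n) {a b : ℕ} (ha : a < n) (hb : b < n) (hab : a ≠ b) :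
    (a : Fin n) ≠ (b : Fin n) := by
  intro h
  apply hab
  have := congrArg Fin.val h
  rwa [Fin.val_natCast, Fin.val_natCast, Nat.mod_eq_of_lt ha, Nat.mod_eq_of_lt hb] at this

lemma fin_cast_adj_succ {V : Type*} {G : SimpleGraph V} {u : Fin n → V}
    (hadj_uu : ∀ i : Fin n, i ≠ 0 → G.Adj (u i) (u (i + 1)))
    (hn : 3 ≤ n) (x : ℕ) (h1 : 1 ≤ x) (hx : x < n) :
    G.Adj (u ((x : ℕ) : Fin n)) (u ((x + 1 : ℕ) : Fin n)) := by
  have hne0 : ((x : ℕ) : Fin n) ≠ 0 := by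
    intro h
    rw [fin_natCast_eq_zero_iff hn x hx] at h
    omega
  have h6 := hadj_uu _ hne0
  have hcast : ((x : ℕ) : Fin n) + 1 = ((x + 1 : ℕ) : Fin n) := by
    rw [show (1 : Fin n) = ((1 : ℕ) : Fin n) by rw [Nat.cast_one], ← Nat.cast_add]
  rwa [hcast] at h6


lemma gcd_facts {k d : ℕ} (hn : 3 ≤ n) (hk1 : 1 ≤ k) (hk2 : 2 * k < n)
    (hd : d = n.gcd k) : 1 ≤ d ∧ d ∣ n ∧ d ∣ k ∧ 3 * d ≤ n := by
  have hdn : d ∣ n := hd ▸ Nat.gcd_dvd_left n k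
  have hdk : d ∣ k := hd ▸ Nat.gcd_dvd_right n k
  have hd1 : 1 ≤ d := hd ▸ Nat.gcd_pos_of_pos_left k (by omega)
  have hdk' : d ≤ k := Nat.le_of_dvd (by omega) hdk
  refine ⟨hd1, hdn, hdk, ?_⟩
  obtain ⟨L, hL⟩ := hdn
  have hL3 : 3 ≤ L := by
    by_contra hcon
    push_neg at hcon
    have : d * L ≤ d * 2 := Nat.mul_le_mul_left d (by omega)
    omega
  calc 3 * d = d * 3 := by ring
    _ ≤ d * L := Nat.mul_le_mul_left d hL3
    _ = n := hL.symm

lemma phaseA_odd {V : Type*} {G : SimpleGraph V} {T : Set V} {k d m : ℕ}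
    (hn : 3 ≤ n) (hk1 : 1 ≤ k) (hk2 : 2 * k < n) (hd : d = n.gcd k)
    (hm : m = n / 2 + 1 - d)
    {u v : Fin n → V}
    (hclosed : ∀ x a b : V, a ≠ b → a ∈ T → b ∈ T → G.Adj x a → G.Adj x b → x ∈ T)
    (hadj_uu : ∀ i : Fin n, i ≠ 0 → G.Adj (u i) (u (i + 1)))
    (hadj_uv : ∀ i : Fin n, G.Adj (u i) (v i))
    (hu_inj : Function.Injective u)
    (huv : ∀ i j : Fin n, u i ≠ v j)
    (hseedU : ∀ i : ℕ, i < m → u ((2 * i + 1 : ℕ) : Fin n) ∈ T)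
    (hrun : ∀ j : ℕ, j < d → v ((2 * m + j : ℕ) : Fin n) ∈ T) :
    ∀ x : ℕ, 1 ≤ x → x ≤ n - d → u ((x : ℕ) : Fin n) ∈ T := by
  obtain ⟨hd1, hdn, hdk, h3d⟩ := gcd_facts hn hk1 hk2 hd
  have hm1 : 1 ≤ m := by omega
  have h2m : 2 * m ≤ n - d + 1 := by omega
  intro x
  induction x using Nat.strong_induction_on with
  | _ x ih =>
    intro h1 hx
    have hxn : x < n := by omega
    by_cases hlad : 2 * m ≤ x
    · -- ladder
      have hprev : u ((x - 1 : ℕ) : Fin n) ∈ T := by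
        rcases Nat.lt_or_ge (x - 1) (2 * m) with hc | hc
        · -- x - 1 = 2m - 1 : a seed
          have hx1 : x - 1 = 2 * (m - 1) + 1 := by omega
          rw [hx1]
          exact hseedU (m - 1) (by omega)
        · exact ih (x - 1) (by omega) (by omega) (by omega)
      have hvx : v ((x : ℕ) : Fin n) ∈ T := by
        have hj := hrun (x - 2 * m) (by omega)
        rw [show 2 * m + (x - 2 * m) = x by omega] at hj
        exact hj
      refine hclosed _ (u ((x - 1 : ℕ) : Fin n)) (v ((x : ℕ) : Fin n)) (huv _ _)
        hprev hvx ?_ (hadj_uv _)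
      have h6 := fin_cast_adj_succ hadj_uu hn (x - 1) (by omega) (by omega)
      rw [show x - 1 + 1 = x by omega] at h6
      exact h6.symm
    · push_neg at hlad
      by_cases hpar : x % 2 = 1
      · -- odd seed
        have hx1 : x = 2 * (x / 2) + 1 := by omega
        rw [hx1]
        exact hseedU (x / 2) (by omega)
      · -- even fill
        have hx2 : 2 ≤ x := by omega
        have hxud : x ≤ 2 * m - 2 := by omega
        have hs1 : u ((x - 1 : ℕ) : Fin n) ∈ T := by
          have hx1 : x - 1 = 2 * ((x - 2) / 2) + 1 := by omega
          rw [hx1]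
          exact hseedU ((x - 2) / 2) (by omega)
        have hs2 : u ((x + 1 : ℕ) : Fin n) ∈ T := by
          have hx1 : x + 1 = 2 * (x / 2) + 1 := by omega
          rw [hx1]
          exact hseedU (x / 2) (by omega)
        refine hclosed _ (u ((x - 1 : ℕ) : Fin n)) (u ((x + 1 : ℕ) : Fin n))
          ?_ hs1 hs2 ?_ ?_
        · intro h
          exact fin_cast_ne hn (by omega : x - 1 < n) (by omega : x + 1 < n)
            (by omega) (hu_inj h)
        · have h6 := fin_cast_adj_succ hadj_uu hn (x - 1) (by omega) (by omega)
          rw [show x - 1 + 1 = x by omega] at h6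
          exact h6.symm
        · exact fin_cast_adj_succ hadj_uu hn x (by omega) (by omega)

end PhaseA

section PhaseAEven
open SimpleGraph
attribute [local instance] Classical.propDecidable

variable {n : ℕ} [NeZero n]

lemma phaseA_even {V : Type*} {G : SimpleGraph V} {T : Set V} {k d m : ℕ}
    (hn : 3 ≤ n) (hk1 : 1 ≤ k) (hk2 : 2 * k < n) (hd : d = n.gcd k)
    (hpar : n % 2 = 0) (hm : m = n / 2 + 1 - d)
    {u v : Fin n → V}
    (hclosed : ∀ x a b : V, a ≠ b → a ∈ T → b ∈ T → G.Adj x a → G.Adj x b → x ∈ T)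
    (hadj_uu : ∀ i : Fin n, i ≠ 0 → G.Adj (u i) (u (i + 1)))
    (hadj_uv : ∀ i : Fin n, G.Adj (u i) (v i))
    (hu_inj : Function.Injective u)
    (huv : ∀ i j : Fin n, u i ≠ v j)
    (hu1 : u ((1 : ℕ) : Fin n) ∈ T)
    (hseedU : ∀ i : ℕ, 1 ≤ i → i ≤ m - 1 → u ((2 * i : ℕ) : Fin n) ∈ T)
    (hrun : ∀ j : ℕ, j < d → v ((2 * m - 1 + j : ℕ) : Fin n) ∈ T) :
    ∀ x : ℕ, 1 ≤ x → x ≤ n - d → u ((x : ℕ) : Fin n) ∈ T := by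
  obtain ⟨hd1, hdn, hdk, h3d⟩ := gcd_facts hn hk1 hk2 hd
  have hm2 : 2 ≤ m := by omega
  have h2m : 2 * m - 1 ≤ n - d := by omega
  have hnd : n - d = 2 * m - 2 + d := by omega
  intro x
  induction x using Nat.strong_induction_on with
  | _ x ih =>
    intro h1 hx
    have hxn : x < n := by omega
    by_cases hlad : 2 * m - 1 ≤ x
    · -- ladder
      have hprev : u ((x - 1 : ℕ) : Fin n) ∈ T := by
        rcases Nat.lt_or_ge (x - 1) (2 * m - 1) with hc | hc
        · -- x - 1 = 2m - 2 : a seed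
          have hx1 : x - 1 = 2 * (m - 1) := by omega
          rw [hx1]
          exact hseedU (m - 1) (by omega) (by omega)
        · exact ih (x - 1) (by omega) (by omega) (by omega)
      have hvx : v ((x : ℕ) : Fin n) ∈ T := by
        have hj := hrun (x - (2 * m - 1)) (by omega)
        rw [show 2 * m - 1 + (x - (2 * m - 1)) = x by omega] at hj
        exact hj
      refine hclosed _ (u ((x - 1 : ℕ) : Fin n)) (v ((x : ℕ) : Fin n)) (huv _ _)
        hprev hvx ?_ (hadj_uv _)
      have h6 := fin_cast_adj_succ hadj_uu hn (x - 1) (by omega) (by omega)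
      rw [show x - 1 + 1 = x by omega] at h6
      exact h6.symm
    · push_neg at hlad
      by_cases hx1 : x = 1
      · rw [hx1]; exact hu1
      · by_cases hpar2 : x % 2 = 0
        · -- even seed
          have he : x = 2 * (x / 2) := by omega
          rw [he]
          exact hseedU (x / 2) (by omega) (by omega)
        · -- odd fill, 3 ≤ x ≤ 2m - 3
          have hx3 : 3 ≤ x := by omega
          have hxud : x ≤ 2 * m - 3 := by omega
          have hs1 : u ((x - 1 : ℕ) : Fin n) ∈ T := by
            have hxe : x - 1 = 2 * ((x - 1) / 2) := by omega
            rw [hxe]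
            exact hseedU ((x - 1) / 2) (by omega) (by omega)
          have hs2 : u ((x + 1 : ℕ) : Fin n) ∈ T := by
            have hxe : x + 1 = 2 * ((x + 1) / 2) := by omega
            rw [hxe]
            exact hseedU ((x + 1) / 2) (by omega) (by omega)
          refine hclosed _ (u ((x - 1 : ℕ) : Fin n)) (u ((x + 1 : ℕ) : Fin n))
            ?_ hs1 hs2 ?_ ?_
          · intro h
            exact fin_cast_ne hn (by omega : x - 1 < n) (by omega : x + 1 < n)
              (by omega) (hu_inj h)
          · have h6 := fin_cast_adj_succ hadj_uu hn (x - 1) (by omega) (by omega)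
            rw [show x - 1 + 1 = x by omega] at h6
            exact h6.symm
          · exact fin_cast_adj_succ hadj_uu hn x (by omega) (by omega)

end PhaseAEven

section Assembly
open SimpleGraph
attribute [local instance] Classical.propDecidable

variable {n k : ℕ} [NeZero n]

lemma fin_cast_eq_iff_modEq {a b : ℕ} : ((a : Fin n) = (b : Fin n)) ↔ a ≡ b [MOD n] := by
  constructor
  · intro h
    have := congrArg Fin.val h
    rwa [Fin.val_natCast, Fin.val_natCast] at this
  · exact fin_cast_eq_of_modEq

lemma copy_odd_full (hn : 3 ≤ n) (hk1 : 1 ≤ k) (hk2 : 2 * k < n) (b : Bool)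
    {T : Set (PV n)}
    (hclosed : ∀ x a c : PV n, a ≠ c → a ∈ T → c ∈ T →
      (petersenSurgery n k).Adj x a → (petersenSurgery n k).Adj x c → x ∈ T)
    (hseedU : ∀ i : ℕ, i < n / 2 + 1 - n.gcd k →
      pu n b ((2 * i + 1 : ℕ) : Fin n) ∈ T)
    (hrun : ∀ j : ℕ, j < n.gcd k →
      pv n b ((2 * (n / 2 + 1 - n.gcd k) + j : ℕ) : Fin n) ∈ T) :
    ∀ i : Fin n, pu n b i ∈ T ∧ pv n b i ∈ T := by
  have hkn : k < n := by omega
  refine engine hn hk1 hk2 rfl hclosed (adj_uu hn b) (adj_uv hn b)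
    (adj_vv hn hk1 hkn b) (fun a c h => pv_inj h) (pu_ne_pv b b)
    ?_ (2 * (n / 2 + 1 - n.gcd k)) hrun
  exact phaseA_odd hn hk1 hk2 rfl rfl hclosed (adj_uu hn b) (adj_uv hn b)
    (fun a c h => pu_inj h) (pu_ne_pv b b) hseedU hrun

lemma copy_even_full (hn : 3 ≤ n) (hk1 : 1 ≤ k) (hk2 : 2 * k < n) (hpar : n % 2 = 0)
    {T : Set (PV n)}
    (hclosed : ∀ x a c : PV n, a ≠ c → a ∈ T → c ∈ T →
      (petersenSurgery n k).Adj x a → (petersenSurgery n k).Adj x c → x ∈ T)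
    (hu1 : pu n true ((1 : ℕ) : Fin n) ∈ T)
    (hseedU : ∀ i : ℕ, 1 ≤ i → i ≤ n / 2 + 1 - n.gcd k - 1 →
      pu n true ((2 * i : ℕ) : Fin n) ∈ T)
    (hrun : ∀ j : ℕ, j < n.gcd k →
      pv n true ((2 * (n / 2 + 1 - n.gcd k) - 1 + j : ℕ) : Fin n) ∈ T) :
    ∀ i : Fin n, pu n true i ∈ T ∧ pv n true i ∈ T := by
  have hkn : k < n := by omega
  refine engine hn hk1 hk2 rfl hclosed (adj_uu hn true) (adj_uv hn true)
    (adj_vv hn hk1 hkn true) (fun a c h => pv_inj h) (pu_ne_pv true true)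
    ?_ (2 * (n / 2 + 1 - n.gcd k) - 1) hrun
  exact phaseA_even hn hk1 hk2 rfl hpar rfl hclosed (adj_uu hn true) (adj_uv hn true)
    (fun a c h => pu_inj h) (pu_ne_pv true true) hu1 hseedU hrun

end Assembly

section Upper
open SimpleGraph
attribute [local instance] Classical.propDecidable

variable {n k : ℕ} [NeZero n]

lemma upper_petersen (hn : 3 ≤ n) (hk1 : 1 ≤ k) (hk2 : 2 * k < n) :
    ∃ S : Set (PV n), S.ncard = n + 1 ∧ IsHullSet (petersenSurgery n k) S := by
  obtain ⟨hd1, hdn, hdk, h3d⟩ := gcd_facts (n := n) (k := k) hn hk1 hk2 rfl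
  set d := n.gcd k with hd
  set m := n / 2 + 1 - d with hm
  have hm1 : 1 ≤ m := by omega
  have hbound : 2 * m + d ≤ n + 1 := by omega
  -- injectivity helpers
  have hinjU : ∀ b : Bool, Set.InjOn (fun i => pu n b ((2 * i + 1 : ℕ) : Fin n))
      ↑(Finset.range m) := by
    intro b i hi j hj h
    simp only [Finset.coe_range, Set.mem_Iio] at hi hj
    have h2 := fin_cast_eq_iff_modEq.1 (pu_inj h)
    have := h2.eq_of_lt_of_lt (by omega) (by omega)
    omega
  have hinjU2 : Set.InjOn (fun i => pu n true ((2 * (i + 1) : ℕ) : Fin n))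
      ↑(Finset.range (m - 1)) := by
    intro i hi j hj h
    simp only [Finset.coe_range, Set.mem_Iio] at hi hj
    have h2 := fin_cast_eq_iff_modEq.1 (pu_inj h)
    have := h2.eq_of_lt_of_lt (by omega) (by omega)
    omega
  have hinjV : ∀ (b : Bool) (a0 : ℕ), Set.InjOn (fun j => pv n b ((a0 + j : ℕ) : Fin n))
      ↑(Finset.range d) := by
    intro b a0 i hi j hj h
    simp only [Finset.coe_range, Set.mem_Iio] at hi hj
    have h2 := fin_cast_eq_iff_modEq.1 (pv_inj h)
    have h3 := Nat.ModEq.add_left_cancel' a0 h2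
    exact h3.eq_of_lt_of_lt (by omega) (by omega)
  -- the four seed finsets (copy 2 depends on parity)
  set F1u : Finset (PV n) :=
    (Finset.range m).image (fun i => pu n false ((2 * i + 1 : ℕ) : Fin n)) with hF1u
  set F1v : Finset (PV n) :=
    (Finset.range d).image (fun j => pv n false ((2 * m + j : ℕ) : Fin n)) with hF1v
  have hcard1u : F1u.card = m := by
    rw [hF1u, Finset.card_image_of_injOn (hinjU false), Finset.card_range]
  have hcard1v : F1v.card = d := by
    rw [hF1v, Finset.card_image_of_injOn (hinjV false (2 * m)), Finset.card_range]
  have hdisj1 : Disjoint F1u F1v := by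
    rw [Finset.disjoint_left]
    rintro x hx hy
    simp only [hF1u, hF1v, Finset.mem_image] at hx hy
    obtain ⟨i, _, rfl⟩ := hx
    obtain ⟨j, _, hj⟩ := hy
    simp at hj
  by_cases hpar : n % 2 = 1
  · -- n odd : copy 2 = mirror of copy 1
    set F2u : Finset (PV n) :=
      (Finset.range m).image (fun i => pu n true ((2 * i + 1 : ℕ) : Fin n)) with hF2u
    set F2v : Finset (PV n) :=
      (Finset.range d).image (fun j => pv n true ((2 * m + j : ℕ) : Fin n)) with hF2v
    set SF := F1u ∪ F1v ∪ (F2u ∪ F2v) with hSF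
    have hcard2u : F2u.card = m := by
      rw [hF2u, Finset.card_image_of_injOn (hinjU true), Finset.card_range]
    have hcard2v : F2v.card = d := by
      rw [hF2v, Finset.card_image_of_injOn (hinjV true (2 * m)), Finset.card_range]
    have hdisj2 : Disjoint F2u F2v := by
      rw [Finset.disjoint_left]
      rintro x hx hy
      simp only [hF2u, hF2v, Finset.mem_image] at hx hy
      obtain ⟨i, _, rfl⟩ := hx
      obtain ⟨j, _, hj⟩ := hy
      simp at hj
    have hdisj12 : Disjoint (F1u ∪ F1v) (F2u ∪ F2v) := by
      rw [Finset.disjoint_left]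
      rintro x hx hy
      simp only [hF1u, hF1v, hF2u, hF2v, Finset.mem_union, Finset.mem_image] at hx hy
      rcases hx with ⟨i, _, rfl⟩ | ⟨i, _, rfl⟩ <;>
        rcases hy with ⟨j, _, hj⟩ | ⟨j, _, hj⟩ <;> simp at hj
    have hcard : SF.card = n + 1 := by
      rw [hSF, Finset.card_union_of_disjoint hdisj12,
        Finset.card_union_of_disjoint hdisj1, Finset.card_union_of_disjoint hdisj2,
        hcard1u, hcard1v, hcard2u, hcard2v]
      omega
    refine ⟨↑SF, by rw [Set.ncard_coe_finset, hcard], ?_⟩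
    apply isHullSet_of_pHull_eq_univ
    set T := pHull (petersenSurgery n k) (↑SF : Set (PV n)) with hT
    have hclosed : ∀ x a c : PV n, a ≠ c → a ∈ T → c ∈ T →
        (petersenSurgery n k).Adj x a → (petersenSurgery n k).Adj x c → x ∈ T :=
      fun x a c h1 h2 h3 h4 h5 => pHull_closed _ _ h1 h2 h3 h4 h5
    have hseed : ∀ x ∈ SF, x ∈ T := fun x hx =>
      seeds_subset_pHull _ _ (Finset.mem_coe.2 hx)
    have hcopy1 := copy_odd_full hn hk1 hk2 false hclosed
      (fun i hi => hseed _ (by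
        simp only [hSF, Finset.mem_union]
        exact Or.inl (Or.inl (Finset.mem_image.2 ⟨i, Finset.mem_range.2 hi, rfl⟩))))
      (fun j hj => hseed _ (by
        simp only [hSF, Finset.mem_union]
        exact Or.inl (Or.inr (Finset.mem_image.2 ⟨j, Finset.mem_range.2 hj, rfl⟩))))
    have hcopy2 := copy_odd_full hn hk1 hk2 true hclosed
      (fun i hi => hseed _ (by
        simp only [hSF, Finset.mem_union]
        exact Or.inr (Or.inl (Finset.mem_image.2 ⟨i, Finset.mem_range.2 hi, rfl⟩))))
      (fun j hj => hseed _ (by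
        simp only [hSF, Finset.mem_union]
        exact Or.inr (Or.inr (Finset.mem_image.2 ⟨j, Finset.mem_range.2 hj, rfl⟩))))
    ext x
    simp only [Set.mem_univ, iff_true]
    rcases x with (i | i) | (i | i)
    · exact (hcopy1 i).1
    · exact (hcopy1 i).2
    · exact (hcopy2 i).1
    · exact (hcopy2 i).2
  · -- n even
    have hpar0 : n % 2 = 0 := by omega
    have hm2 : 2 ≤ m := by omega
    set F2u : Finset (PV n) :=
      (Finset.range (m - 1)).image (fun i => pu n true ((2 * (i + 1) : ℕ) : Fin n)) with hF2u
    set F2v : Finset (PV n) :=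
      (Finset.range d).image (fun j => pv n true ((2 * m - 1 + j : ℕ) : Fin n)) with hF2v
    set SF := F1u ∪ F1v ∪ (F2u ∪ F2v) with hSF
    have hcard2u : F2u.card = m - 1 := by
      rw [hF2u, Finset.card_image_of_injOn hinjU2, Finset.card_range]
    have hcard2v : F2v.card = d := by
      rw [hF2v, Finset.card_image_of_injOn (hinjV true (2 * m - 1)), Finset.card_range]
    have hdisj2 : Disjoint F2u F2v := by
      rw [Finset.disjoint_left]
      rintro x hx hy
      simp only [hF2u, hF2v, Finset.mem_image] at hx hy
      obtain ⟨i, _, rfl⟩ := hx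
      obtain ⟨j, _, hj⟩ := hy
      simp at hj
    have hdisj12 : Disjoint (F1u ∪ F1v) (F2u ∪ F2v) := by
      rw [Finset.disjoint_left]
      rintro x hx hy
      simp only [hF1u, hF1v, hF2u, hF2v, Finset.mem_union, Finset.mem_image] at hx hy
      rcases hx with ⟨i, _, rfl⟩ | ⟨i, _, rfl⟩ <;>
        rcases hy with ⟨j, _, hj⟩ | ⟨j, _, hj⟩ <;> simp at hj
    have hcard : SF.card = n + 1 := by
      rw [hSF, Finset.card_union_of_disjoint hdisj12,
        Finset.card_union_of_disjoint hdisj1, Finset.card_union_of_disjoint hdisj2,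
        hcard1u, hcard1v, hcard2u, hcard2v]
      omega
    refine ⟨↑SF, by rw [Set.ncard_coe_finset, hcard], ?_⟩
    apply isHullSet_of_pHull_eq_univ
    set T := pHull (petersenSurgery n k) (↑SF : Set (PV n)) with hT
    have hclosed : ∀ x a c : PV n, a ≠ c → a ∈ T → c ∈ T →
        (petersenSurgery n k).Adj x a → (petersenSurgery n k).Adj x c → x ∈ T :=
      fun x a c h1 h2 h3 h4 h5 => pHull_closed _ _ h1 h2 h3 h4 h5
    have hseed : ∀ x ∈ SF, x ∈ T := fun x hx =>
      seeds_subset_pHull _ _ (Finset.mem_coe.2 hx)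
    have hcopy1 := copy_odd_full hn hk1 hk2 false hclosed
      (fun i hi => hseed _ (by
        simp only [hSF, Finset.mem_union]
        exact Or.inl (Or.inl (Finset.mem_image.2 ⟨i, Finset.mem_range.2 hi, rfl⟩))))
      (fun j hj => hseed _ (by
        simp only [hSF, Finset.mem_union]
        exact Or.inl (Or.inr (Finset.mem_image.2 ⟨j, Finset.mem_range.2 hj, rfl⟩))))
    have hseed2U : ∀ i : ℕ, 1 ≤ i → i ≤ m - 1 → pu n true ((2 * i : ℕ) : Fin n) ∈ T := by
      intro i h1i h2i
      refine hseed _ ?_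
      simp only [hSF, Finset.mem_union]
      refine Or.inr (Or.inl (Finset.mem_image.2 ⟨i - 1, Finset.mem_range.2 (by omega), ?_⟩))
      rw [show i - 1 + 1 = i by omega]
    have hu1 : pu n true ((1 : ℕ) : Fin n) ∈ T := by
      have hs1 : pu n false ((1 : ℕ) : Fin n) ∈ T := by
        refine hseed _ ?_
        simp only [hSF, Finset.mem_union]
        exact Or.inl (Or.inl (Finset.mem_image.2 ⟨0, Finset.mem_range.2 (by omega),
          by norm_num⟩))
      have hs2 : pu n true ((2 : ℕ) : Fin n) ∈ T := hseed2U 1 le_rfl (by omega)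
      refine hclosed _ (pu n false ((1 : ℕ) : Fin n)) (pu n true ((2 : ℕ) : Fin n))
        (pu_ne_pu_bool (by simp) _ _) hs1 hs2 ?_ ?_
      · -- cross edge at index 1
        have := adj_cross (n := n) (k := k) hn ((1 : ℕ) : Fin n) (Or.inr (by
          rw [Nat.cast_one]))
        exact this.symm
      · -- rim edge from u'_1 to u'_2
        have h6 := adj_uu (n := n) (k := k) hn true ((1 : ℕ) : Fin n)
          (by rw [Nat.cast_one]; exact fin_one_ne_zero hn)
        have hc : ((1 : ℕ) : Fin n) + 1 = ((2 : ℕ) : Fin n) := by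
          rw [show (1 : Fin n) = ((1 : ℕ) : Fin n) by rw [Nat.cast_one], ← Nat.cast_add]
        rwa [hc] at h6
    have hcopy2 := copy_even_full hn hk1 hk2 hpar0 hclosed hu1 hseed2U
      (fun j hj => hseed _ (by
        simp only [hSF, Finset.mem_union]
        exact Or.inr (Or.inr (Finset.mem_image.2 ⟨j, Finset.mem_range.2 hj, rfl⟩))))
    ext x
    simp only [Set.mem_univ, iff_true]
    rcases x with (i | i) | (i | i)
    · exact (hcopy1 i).1
    · exact (hcopy1 i).2
    · exact (hcopy2 i).1
    · exact (hcopy2 i).2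

end Upper

theorem stmt16 (n k : ℕ) [NeZero n] (hk1 : 1 ≤ k) (hk2 : 2 * k < n) :
    hullNumber (petersenSurgery n k) = n + 1 := by
  have hn : 3 ≤ n := by omega
  obtain ⟨S, hcard, hhull⟩ := upper_petersen (n := n) (k := k) hn hk1 hk2
  have hmem : n + 1 ∈ {m | ∃ S : Set (PV n), S.ncard = m ∧
      IsHullSet (petersenSurgery n k) S} := ⟨S, hcard, hhull⟩
  have hne : {m | ∃ S : Set (PV n), S.ncard = m ∧
      IsHullSet (petersenSurgery n k) S}.Nonempty := ⟨n + 1, hmem⟩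
  apply le_antisymm
  · exact Nat.sInf_le hmem
  · obtain ⟨S', hc', hh'⟩ := Nat.sInf_mem hne
    rw [hullNumber, ← hc']
    exact lb_petersen hn hk1 hk2 S' hh'
end
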